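/- arXiv:0906.2925 — 5 statements merged into one kernel-verified Lean document; each statement's English description precedes it below -/
import Mathlib

section
/- Let A be a UFD with fraction field K, let ρ : A → L be a ring homomorphism into a field L, and let f₁, …, f_n ∈ A[U,V] be nonzero homogeneous polynomials. Write g = gcd(f₁,…,f_n) ∈ A[U,V] and f_i = g·h_i. If ρ(h₁), …, ρ(h_n) have no common homogeneous factor of positive degree in L[U,V], then ρ(g) divides gcd(ρ(f₁),…,ρ(f_n)) and gcd(ρ(f₁),…,ρ(f_n)) divides ρ(g) in L[U,V]; in particular ρ(g) and gcd(ρ(f₁),…,ρ(f_n)) agree up to a unit of L. -/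
open Polynomial in
noncomputable def homDeg (σ R : Type*) [CommRing R] :
    MvPolynomial σ R →+* Polynomial (MvPolynomial σ R) :=
  (MvPolynomial.aeval (fun i : σ => Polynomial.C (MvPolynomial.X i) * Polynomial.X)).toRingHom

lemma homDeg_monomial {σ R : Type*} [CommRing R] (u : σ →₀ ℕ) (a : R) :
    homDeg σ R (MvPolynomial.monomial u a)
      = Polynomial.monomial u.degree (MvPolynomial.monomial u a) := by
  rw [homDeg]
  simp only [AlgHom.toRingHom_eq_coe, RingHom.coe_coe, MvPolynomial.aeval_monomial]
  rw [Finsupp.prod]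
  simp_rw [mul_pow, ← Polynomial.C_pow]
  rw [Finset.prod_mul_distrib, Finset.prod_pow_eq_pow_sum, ← map_prod,
    Polynomial.algebraMap_apply, MvPolynomial.algebraMap_eq, ← mul_assoc, ← Polynomial.C_mul,
    Polynomial.C_mul_X_pow_eq_monomial]
  congr 1
  rw [MvPolynomial.monomial_eq, Finsupp.prod]

lemma homogeneousComponent_monomial' {σ R : Type*} [CommRing R] (k : ℕ) (u : σ →₀ ℕ) (a : R) :
    MvPolynomial.homogeneousComponent k (MvPolynomial.monomial u a)
      = if u.degree = k then MvPolynomial.monomial u a else 0 := by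
  classical
  ext d
  rw [MvPolynomial.coeff_homogeneousComponent]
  by_cases hd : d = u
  · subst hd
    by_cases hk : d.degree = k <;> simp [hk]
  · have : MvPolynomial.coeff d (MvPolynomial.monomial u a) = 0 := by
      rw [MvPolynomial.coeff_monomial, if_neg (Ne.symm hd)]
    simp only [this]
    split <;> split <;> simp_all [MvPolynomial.coeff_monomial, Ne.symm hd]

lemma homDeg_coeff {σ R : Type*} [CommRing R] (p : MvPolynomial σ R) (k : ℕ) :
    (homDeg σ R p).coeff k = MvPolynomial.homogeneousComponent k p := by
  induction p using MvPolynomial.induction_on' with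
  | monomial u a =>
    rw [homDeg_monomial, Polynomial.coeff_monomial, homogeneousComponent_monomial']
  | add p q hp hq => simp [map_add, hp, hq, Polynomial.coeff_add]

lemma homDeg_ne_zero {σ R : Type*} [CommRing R] {p : MvPolynomial σ R} (hp : p ≠ 0) :
    homDeg σ R p ≠ 0 := by
  intro h0
  apply hp
  have hcz : ∀ k, MvPolynomial.homogeneousComponent k p = 0 := fun k => by
    rw [← homDeg_coeff, h0, Polynomial.coeff_zero]
  rw [← MvPolynomial.sum_homogeneousComponent p]
  exact Finset.sum_eq_zero fun i _ => hcz i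

lemma homDeg_isHomogeneous {σ R : Type*} [CommRing R] {F : MvPolynomial σ R} {n : ℕ}
    (hF : F.IsHomogeneous n) : homDeg σ R F = Polynomial.monomial n F := by
  ext k
  rw [homDeg_coeff, Polynomial.coeff_monomial,
    MvPolynomial.homogeneousComponent_of_mem ((MvPolynomial.mem_homogeneousSubmodule n F).2 hF)]
  split_ifs with h1 h2 h2 <;> first | rfl | omega

lemma isHomogeneous_of_dvd {σ R : Type*} [CommRing R] [IsDomain R]
    {F p : MvPolynomial σ R} {n : ℕ} (hF : F.IsHomogeneous n) (hF0 : F ≠ 0)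
    (hdvd : p ∣ F) : p.IsHomogeneous p.totalDegree := by
  obtain ⟨q, rfl⟩ := hdvd
  have hp0 : p ≠ 0 := left_ne_zero_of_mul hF0
  have hq0 : q ≠ 0 := right_ne_zero_of_mul hF0
  have hP : homDeg σ R p ≠ 0 := homDeg_ne_zero hp0
  have hQ : homDeg σ R q ≠ 0 := homDeg_ne_zero hq0
  have hmul : homDeg σ R p * homDeg σ R q = Polynomial.monomial n (p * q) := by
    rw [← map_mul, homDeg_isHomogeneous hF]
  have hdeg : (homDeg σ R p).natDegree + (homDeg σ R q).natDegree = n := by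
    classical
    rw [← Polynomial.natDegree_mul hP hQ, hmul, Polynomial.natDegree_monomial, if_neg hF0]
  have htr : (homDeg σ R p).natTrailingDegree + (homDeg σ R q).natTrailingDegree = n := by
    rw [← Polynomial.natTrailingDegree_mul hP hQ, hmul,
      Polynomial.natTrailingDegree_monomial hF0]
  have h1 := Polynomial.natTrailingDegree_le_natDegree (homDeg σ R p)
  have h2 := Polynomial.natTrailingDegree_le_natDegree (homDeg σ R q)
  set k := (homDeg σ R p).natDegree with hkdef
  have hk : (homDeg σ R p).natTrailingDegree = k := by omega
  have hcomp : ∀ i, i ≠ k → MvPolynomial.homogeneousComponent i p = 0 := by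
    intro i hi
    rcases lt_or_gt_of_ne hi with hlt | hgt
    · rw [← homDeg_coeff]
      exact Polynomial.coeff_eq_zero_of_lt_natTrailingDegree (hk ▸ hlt)
    · rw [← homDeg_coeff]
      exact Polynomial.coeff_eq_zero_of_natDegree_lt hgt
  have hpk : p = MvPolynomial.homogeneousComponent k p := by
    conv_lhs => rw [← MvPolynomial.sum_homogeneousComponent p]
    refine Finset.sum_eq_single k (fun i _ hik => hcomp i hik) (fun hk' : k ∉ _ => ?_)
    exact MvPolynomial.homogeneousComponent_eq_zero _ _
      (by simpa [Nat.lt_succ_iff] using Finset.mem_range.not.mp hk')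
  have hhom : p.IsHomogeneous k := by
    rw [hpk]; exact MvPolynomial.homogeneousComponent_isHomogeneous k p
  rwa [hhom.totalDegree hp0]


/-- GCD of several binary forms under specialization: if `g = gcd(f₁,…,f_n)` in `A[U,V]`,
`f i = g * h i`, and the images `ρ(h i)` have no common homogeneous factor of positive
degree in `L[U,V]`, then `ρ(g)` agrees with any gcd of the `ρ(f i)` up to a unit. -/
theorem stmt_1 {A : Type*} [CommRing A] [IsDomain A] [UniqueFactorizationMonoid A]
    {L : Type*} [Field L] (ρ : A →+* L) (n : ℕ) (hn : 2 ≤ n)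
    (f : Fin n → MvPolynomial (Fin 2) A) (df : Fin n → ℕ)
    (hf0 : ∀ i, f i ≠ 0) (hfh : ∀ i, (f i).IsHomogeneous (df i))
    (g : MvPolynomial (Fin 2) A)
    -- g is a gcd of the f i :
    (hgdvd : ∀ i, g ∣ f i)
    (hggcd : ∀ e : MvPolynomial (Fin 2) A, (∀ i, e ∣ f i) → e ∣ g)
    (h : Fin n → MvPolynomial (Fin 2) A) (hfac : ∀ i, f i = g * h i)
    -- the ρ(h i) have no common homogeneous factor of positive degree :
    (hnocf : ¬ ∃ (c : MvPolynomial (Fin 2) L) (e : ℕ), 0 < c.totalDegree ∧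
        c.IsHomogeneous e ∧ ∀ i, c ∣ MvPolynomial.map ρ (h i))
    -- G is a gcd of the ρ(f i) :
    (G : MvPolynomial (Fin 2) L)
    (hGdvd : ∀ i, G ∣ MvPolynomial.map ρ (f i))
    (hGgcd : ∀ e : MvPolynomial (Fin 2) L, (∀ i, e ∣ MvPolynomial.map ρ (f i)) → e ∣ G) :
    MvPolynomial.map ρ g ∣ G ∧ G ∣ MvPolynomial.map ρ g := by
  set ρg := MvPolynomial.map ρ g with hρg
  by_cases hg0 : ρg = 0
  · -- then all ρ(f i) = 0, so G = 0
    have hfz : ∀ i, MvPolynomial.map ρ (f i) = 0 := fun i => by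
      rw [hfac i, map_mul, ← hρg, hg0, zero_mul]
    have hG0 : G = 0 := by
      have := hGgcd 0 (fun i => by rw [hfz i])
      exact zero_dvd_iff.mp this
    rw [hG0, hg0]
    exact ⟨dvd_refl 0, dvd_refl 0⟩
  · -- main case
    have hgG : ρg ∣ G :=
      hGgcd ρg (fun i => by rw [hfac i, map_mul]; exact dvd_mul_right _ _)
    obtain ⟨c, hc⟩ := hgG
    have hchi : ∀ i, c ∣ MvPolynomial.map ρ (h i) := by
      intro i
      have hGi := hGdvd i
      rw [hfac i, map_mul, hc, ← hρg] at hGi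
      exact (mul_dvd_mul_iff_left hg0).mp hGi
    -- some ρ(h i) is nonzero
    have hex : ∃ i, MvPolynomial.map ρ (h i) ≠ 0 := by
      by_contra hall
      push_neg at hall
      exact hnocf ⟨MvPolynomial.X 0, 1, by simp [MvPolynomial.totalDegree_X],
        MvPolynomial.isHomogeneous_X _ _, fun i => by rw [hall i]; exact dvd_zero _⟩
    obtain ⟨i₀, hi₀⟩ := hex
    have hFi₀ : MvPolynomial.map ρ (f i₀) ≠ 0 := by
      rw [hfac i₀, map_mul]
      exact mul_ne_zero hg0 hi₀
    have hFhom : (MvPolynomial.map ρ (f i₀)).IsHomogeneous (df i₀) := (hfh i₀).map ρ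
    by_cases hcu : IsUnit c
    · refine ⟨⟨c, hc⟩, ?_⟩
      obtain ⟨d, hd⟩ := isUnit_iff_exists_inv.mp hcu
      exact ⟨d, by rw [hc, mul_assoc, hd, mul_one]⟩
    · exfalso
      have hcF : c ∣ MvPolynomial.map ρ (f i₀) := by
        refine (hchi i₀).trans ?_
        rw [hfac i₀, map_mul]
        exact Dvd.intro_left _ rfl
      have hc0 : c ≠ 0 := by
        rintro rfl
        exact hi₀ (zero_dvd_iff.mp (hchi i₀))
      have hchom : c.IsHomogeneous c.totalDegree := isHomogeneous_of_dvd hFhom hFi₀ hcF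
      have hcpos : 0 < c.totalDegree := by
        rcases Nat.eq_zero_or_pos c.totalDegree with h0 | hpos
        · exfalso
          apply hcu
          have hc00 : c.IsHomogeneous 0 :=
            MvPolynomial.isHomogeneous_of_totalDegree_zero (σ := Fin 2) h0
          have : c = MvPolynomial.C (MvPolynomial.coeff 0 c) := by
            ext d
            by_cases hd : d = 0
            · subst hd; simp
            · rw [hc00.coeff_eq_zero (fun hz => hd ((Finsupp.degree_eq_zero_iff d).mp hz)),
                MvPolynomial.coeff_C, if_neg (Ne.symm hd)]
          rw [this]
          exact (isUnit_iff_ne_zero.mpr (fun hz => hc0 (by rw [this, hz, map_zero]))).map _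
        · exact hpos
      exact hnocf ⟨c, c.totalDegree, hcpos, hchom, hchi⟩
end

section
/- Let A be an integral domain, P ∈ A[X₁,…,X_n] a nonzero polynomial of total degree at most d, and S a finite nonempty subset of A. Then the number of n-tuples (x₁,…,x_n) ∈ Sⁿ with P(x₁,…,x_n) = 0 is at most d·|S|^{n-1}. Equivalently, for a uniformly random choice of the x_i in S, the probability that P(x₁,…,x_n) = 0 is at most d/|S|. -/
open MvPolynomial Finset

private lemma sz_aux {A : Type*} [CommRing A] [IsDomain A] [DecidableEq A]
    (S : Finset A) :
    ∀ (n : ℕ) (P : MvPolynomial (Fin n) A), P ≠ 0 → ∀ d : ℕ, P.totalDegree ≤ d →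
      ((Fintype.piFinset fun _ : Fin n => S).filter
          (fun x => MvPolynomial.eval x P = 0)).card * S.card ≤ d * S.card ^ n := by
  intro n
  induction n with
  | zero =>
    intro P hP d hdeg
    obtain ⟨a, rfl⟩ := MvPolynomial.C_surjective (Fin 0) P
    have ha : a ≠ 0 := fun h => hP (by rw [h, map_zero])
    have h0 : ((Fintype.piFinset fun _ : Fin 0 => S).filter
        (fun x => MvPolynomial.eval x (MvPolynomial.C a) = 0)).card = 0 := by
      rw [Finset.card_eq_zero, Finset.filter_eq_empty_iff]
      intro x _
      simpa using ha
    rw [h0, zero_mul]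
    exact Nat.zero_le _
  | succ n ih =>
    intro P hP d hdeg
    set Q : Polynomial (MvPolynomial (Fin n) A) := MvPolynomial.finSuccEquiv A n P with hQdef
    have hQ : Q ≠ 0 := by
      simp only [hQdef, ne_eq, EmbeddingLike.map_eq_zero_iff]
      exact hP
    set k := Q.natDegree with hk
    set L := Q.leadingCoeff with hLdef
    have hL : L ≠ 0 := Polynomial.leadingCoeff_ne_zero.mpr hQ
    have hLk : L.totalDegree + k ≤ d := by
      refine le_trans ?_ hdeg
      exact MvPolynomial.totalDegree_coeff_finSuccEquiv_add_le P k
        (by rwa [← hQdef, ← Polynomial.leadingCoeff, ← hLdef])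
    have hkd : k ≤ d := le_trans (Nat.le_add_left _ _) hLk
    have hLd : L.totalDegree ≤ d - k := Nat.le_sub_of_add_le hLk
    set T' : Finset (Fin n → A) := Fintype.piFinset fun _ : Fin n => S with hT'
    set Z : Finset (Fin (n + 1) → A) :=
      (Fintype.piFinset fun _ : Fin (n + 1) => S).filter
        (fun x => MvPolynomial.eval x P = 0) with hZ
    have hmemT' : ∀ x ∈ Z, Fin.tail x ∈ T' := by
      intro x hx
      rw [hZ, Finset.mem_filter] at hx
      rw [hT', Fintype.mem_piFinset]
      intro i
      exact Fintype.mem_piFinset.mp hx.1 i.succ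
    have hcard : Z.card = ∑ y ∈ T', (Z.filter fun x => Fin.tail x = y).card :=
      Finset.card_eq_sum_card_fiberwise hmemT'
    have fiber_le : ∀ y ∈ T',
        (Z.filter fun x => Fin.tail x = y).card ≤
          (S.filter fun t => MvPolynomial.eval (Fin.cons t y : Fin (n+1) → A) P = 0).card := by
      intro y _
      apply Finset.card_le_card_of_injOn (fun x => x 0)
      · intro x hx
        rw [Finset.mem_coe, Finset.mem_filter] at hx
        obtain ⟨hx1, hx2⟩ := hx
        rw [hZ, Finset.mem_filter] at hx1
        rw [Finset.mem_coe, Finset.mem_filter]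
        refine ⟨Fintype.mem_piFinset.mp hx1.1 0, ?_⟩
        rw [← hx2, Fin.cons_self_tail]
        exact hx1.2
      · intro x hx x' hx' h0
        simp only [Finset.mem_coe, Finset.mem_filter] at hx hx'
        have hc : Fin.cons (x 0) (Fin.tail x) = Fin.cons (x' 0) (Fin.tail x') := by
          rw [hx.2, hx'.2, show x 0 = x' 0 from h0]
        rwa [Fin.cons_self_tail, Fin.cons_self_tail] at hc
    have fiber_le_k : ∀ y ∈ T', MvPolynomial.eval y L ≠ 0 →
        (S.filter fun t => MvPolynomial.eval (Fin.cons t y : Fin (n+1) → A) P = 0).card ≤ k := by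
      intro y _ hy
      set p : Polynomial A := Q.map (MvPolynomial.eval y) with hp
      have hpk : p.coeff k ≠ 0 := by
        rw [hp, Polynomial.coeff_map]
        exact hy
      have hpne : p ≠ 0 := fun h => hpk (by simp [h])
      have heval : ∀ t : A, MvPolynomial.eval (Fin.cons t y : Fin (n+1) → A) P =
          Polynomial.eval t p := by
        intro t
        rw [hp, hQdef]
        exact MvPolynomial.eval_eq_eval_mv_eval' y t P
      calc (S.filter fun t => MvPolynomial.eval (Fin.cons t y : Fin (n+1) → A) P = 0).card
          ≤ p.roots.toFinset.card := by
            apply Finset.card_le_card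
            intro t ht
            rw [Finset.mem_filter] at ht
            rw [Multiset.mem_toFinset, Polynomial.mem_roots hpne]
            rw [Polynomial.IsRoot, ← heval]
            exact ht.2
        _ ≤ Multiset.card p.roots := Multiset.toFinset_card_le _
        _ ≤ p.natDegree := Polynomial.card_roots' p
        _ ≤ k := Polynomial.natDegree_map_le
    have key : Z.card ≤ d * S.card ^ n := by
      have hZL := ih L hL (d - k) hLd
      calc Z.card = ∑ y ∈ T', (Z.filter fun x => Fin.tail x = y).card := hcard
        _ ≤ ∑ y ∈ T', (if MvPolynomial.eval y L = 0 then S.card else k) := by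
            apply Finset.sum_le_sum
            intro y hy
            by_cases h : MvPolynomial.eval y L = 0
            · rw [if_pos h]
              exact le_trans (fiber_le y hy) (Finset.card_filter_le _ _)
            · rw [if_neg h]
              exact le_trans (fiber_le y hy) (fiber_le_k y hy h)
        _ = ∑ y ∈ T'.filter (fun y => MvPolynomial.eval y L = 0), S.card
              + ∑ y ∈ T'.filter (fun y => ¬ MvPolynomial.eval y L = 0), k :=
            Finset.sum_ite _ _
        _ ≤ (T'.filter (fun y => MvPolynomial.eval y L = 0)).card * S.card
              + S.card ^ n * k := by
            rw [Finset.sum_const, Finset.sum_const, smul_eq_mul, smul_eq_mul]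
            gcongr
            calc (T'.filter (fun y => ¬ MvPolynomial.eval y L = 0)).card ≤ T'.card :=
                  Finset.card_filter_le _ _
              _ = S.card ^ n := by
                  rw [hT', Fintype.card_piFinset]
                  simp
        _ ≤ (d - k) * S.card ^ n + S.card ^ n * k := by gcongr
        _ = ((d - k) + k) * S.card ^ n := by ring
        _ = d * S.card ^ n := by rw [Nat.sub_add_cancel hkd]
    calc Z.card * S.card ≤ (d * S.card ^ n) * S.card := by gcongr
      _ = d * S.card ^ (n + 1) := by ring

/-- Zippel–Schwartz lemma: a nonzero polynomial of total degree at most `d` in `n`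
variables over an integral domain vanishes on at most `d * |S|^(n-1)` points of `Sⁿ`. -/
theorem stmt_2 {A : Type*} [CommRing A] [IsDomain A] [DecidableEq A]
    {n d : ℕ} (P : MvPolynomial (Fin n) A) (hP : P ≠ 0) (hdeg : P.totalDegree ≤ d)
    (S : Finset A) (hS : S.Nonempty) :
    ((Fintype.piFinset fun _ : Fin n => S).filter
        (fun x => MvPolynomial.eval x P = 0)).card ≤ d * S.card ^ (n - 1) := by
  have h := sz_aux S n P hP d hdeg
  match n, P, hP, hdeg, h with
  | 0, P, hP, hdeg, h =>
    obtain ⟨a, rfl⟩ := MvPolynomial.C_surjective (Fin 0) P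
    have ha : a ≠ 0 := fun h => hP (by rw [h, map_zero])
    have h0 : ((Fintype.piFinset fun _ : Fin 0 => S).filter
        (fun x => MvPolynomial.eval x (MvPolynomial.C a) = 0)).card = 0 := by
      rw [Finset.card_eq_zero, Finset.filter_eq_empty_iff]
      intro x _
      simpa using ha
    rw [h0]
    exact Nat.zero_le _
  | m + 1, P, hP, hdeg, h =>
    have hSc : 0 < S.card := Finset.card_pos.mpr hS
    have h' : ((Fintype.piFinset fun _ : Fin (m+1) => S).filter
        (fun x => MvPolynomial.eval x P = 0)).card * S.card ≤ (d * S.card ^ m) * S.card := by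
      calc _ ≤ d * S.card ^ (m + 1) := h
        _ = (d * S.card ^ m) * S.card := by ring
    exact Nat.le_of_mul_le_mul_right h' hSc
end

section
/- Let K be a field and let f, g ∈ K[X₁,…,X_n] (n ≥ 1) with g ≠ 0 and gcd(f,g) = 1. Suppose the rational function r = f/g can be written as r = u ∘ h where u ∈ K(T) with deg u ≥ 2 and h ∈ K(X₁,…,X_n). Writing u = u₁/u₂ with u₁, u₂ ∈ K[T] coprime, and h = h₁/h₂ reduced, and λ ∈ K such that u₁ − λu₂ splits over the algebraic closure of K as α·∏_{i=1}^m (T − λ_i) with m = deg u ≥ 2, then f − λg = (unit)·∏_{i=1}^m (h₁ − λ_i h₂) up to a nonzero constant in the algebraic closure; in particular f − λg is reducible in the polynomial ring over the algebraic closure of K whenever deg(f − λ g) = max(deg f, deg g) and each h₁ − λ_i h₂ is non-constant. -/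
open MvPolynomial Finset

private lemma hc_top_ne_zero {R σ : Type*} [CommSemiring R] {p : MvPolynomial σ R} (hp : p ≠ 0) :
    homogeneousComponent p.totalDegree p ≠ 0 := by
  obtain ⟨d, hd, hdeg⟩ := Finset.exists_mem_eq_sup p.support (support_nonempty.2 hp)
    (fun s => s.sum fun _ e => e)
  intro h
  have := congrArg (coeff d) h
  rw [coeff_homogeneousComponent, if_pos, coeff_zero] at this
  · exact (mem_support_iff.1 hd) this
  · show d.degree = p.totalDegree
    rw [Finsupp.degree, totalDegree, hdeg]
    rfl

private lemma tdeg_sub_hc_lt {R σ : Type*} [CommRing R] {q : MvPolynomial σ R}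
    (hne : q - homogeneousComponent q.totalDegree q ≠ 0) :
    (q - homogeneousComponent q.totalDegree q).totalDegree < q.totalDegree := by
  set e := q.totalDegree with he
  have hsup : ∀ d ∈ (q - homogeneousComponent e q).support, d.degree < e := by
    intro d hd
    rw [mem_support_iff, coeff_sub, coeff_homogeneousComponent] at hd
    by_cases hdeg : d.degree = e
    · simp [hdeg] at hd
    · rw [if_neg hdeg, sub_zero] at hd
      refine lt_of_le_of_ne ?_ hdeg
      simpa [Finsupp.degree_apply, Finsupp.sum] using le_totalDegree (mem_support_iff.2 hd)
  have hpos : 0 < e := by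
    obtain ⟨d, hd⟩ := support_nonempty.2 hne
    exact lt_of_le_of_lt (Nat.zero_le _) (hsup d hd)
  rw [totalDegree, Finset.sup_lt_iff (by simpa using hpos)]
  intro d hd
  exact hsup d hd

private lemma tdeg_mul_eq {R σ : Type*} [CommRing R] [IsDomain R] {p q : MvPolynomial σ R}
    (hp : p ≠ 0) (hq : q ≠ 0) :
    (p * q).totalDegree = p.totalDegree + q.totalDegree := by
  refine le_antisymm (totalDegree_mul p q) ?_
  set d := p.totalDegree with hd
  set e := q.totalDegree with he
  set p₁ := homogeneousComponent d p with hp₁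
  set q₁ := homogeneousComponent e q with hq₁
  have hp₁h : p₁.IsHomogeneous d := homogeneousComponent_isHomogeneous d p
  have hq₁h : q₁.IsHomogeneous e := homogeneousComponent_isHomogeneous e q
  have hsplit : p * q = p₁ * q₁ + (p₁ * (q - q₁) + (p - p₁) * q) := by ring
  have hkey : homogeneousComponent (d + e) (p * q) = p₁ * q₁ := by
    rw [hsplit, map_add, map_add]
    have h1 : homogeneousComponent (d + e) (p₁ * q₁) = p₁ * q₁ := by
      rw [homogeneousComponent_of_mem ((mem_homogeneousSubmodule _ _).2 (hp₁h.mul hq₁h)),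
        if_pos rfl]
    have h2 : homogeneousComponent (d + e) (p₁ * (q - q₁)) = 0 := by
      by_cases h0 : q - q₁ = 0
      · rw [h0, mul_zero, map_zero]
      · refine homogeneousComponent_eq_zero _ _ ?_
        calc (p₁ * (q - q₁)).totalDegree ≤ p₁.totalDegree + (q - q₁).totalDegree :=
              totalDegree_mul _ _
          _ < d + e := by
              have h4 : (q - q₁).totalDegree < e := tdeg_sub_hc_lt h0
              have h3 : p₁.totalDegree ≤ d := hp₁h.totalDegree_le
              omega
    have h3 : homogeneousComponent (d + e) ((p - p₁) * q) = 0 := by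
      by_cases h0 : p - p₁ = 0
      · rw [h0, zero_mul, map_zero]
      · refine homogeneousComponent_eq_zero _ _ ?_
        calc ((p - p₁) * q).totalDegree ≤ (p - p₁).totalDegree + q.totalDegree :=
              totalDegree_mul _ _
          _ < d + e := by
              have h4 : (p - p₁).totalDegree < d := tdeg_sub_hc_lt h0
              omega
    rw [h1, h2, h3, add_zero, add_zero]
  by_contra hlt
  push_neg at hlt
  have : homogeneousComponent (d + e) (p * q) = 0 := homogeneousComponent_eq_zero _ _ hlt
  rw [hkey] at this
  exact (mul_ne_zero (hc_top_ne_zero hp) (hc_top_ne_zero hq)) this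

private lemma mv_isUnit_eq_C {R σ : Type*} [CommRing R] [IsDomain R] {w : MvPolynomial σ R}
    (h : IsUnit w) : ∃ e : R, e ≠ 0 ∧ w = C e := by
  classical
  obtain ⟨v, hv⟩ := h.exists_right_inv
  have hw0 : w ≠ 0 := fun h0 => by simp [h0] at hv
  have hv0 : v ≠ 0 := fun h0 => by simp [h0] at hv
  have htd : w.totalDegree = 0 := by
    have := tdeg_mul_eq hw0 hv0
    rw [hv, totalDegree_one] at this
    omega
  refine ⟨w.coeff 0, ?_, ?_⟩
  · intro h0
    apply hw0
    ext d
    by_cases hd : d = 0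
    · simp [hd, h0]
    · rw [coeff_zero]
      refine coeff_eq_zero_of_totalDegree_lt ?_
      rw [htd]
      have : d.degree ≠ 0 := by simpa [Finsupp.degree_eq_zero_iff] using hd
      simpa [Finsupp.degree_apply] using Nat.pos_of_ne_zero this
  · ext d
    by_cases hd : d = 0
    · simp [hd]
    · rw [coeff_C, if_neg (Ne.symm hd)]
      refine coeff_eq_zero_of_totalDegree_lt ?_
      rw [htd]
      have : d.degree ≠ 0 := by simpa [Finsupp.degree_eq_zero_iff] using hd
      simpa [Finsupp.degree_apply] using Nat.pos_of_ne_zero this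

open MvPolynomial Finset
set_option maxHeartbeats 1000000
set_option synthInstance.maxHeartbeats 400000

/-- Homogenized substitution of `(x, y)` into a one-variable polynomial `q`, with
homogenization exponent `e`. -/
private noncomputable def homogEv {A : Type*} [CommSemiring A] {σ : Type*}
    (x y : MvPolynomial σ A) (e : ℕ) (q : Polynomial A) : MvPolynomial σ A :=
  ∑ i ∈ Finset.range (e + 1), MvPolynomial.C (q.coeff i) * x ^ i * y ^ (e - i)

private lemma homogEv_spec {A : Type*} [Field A] {σ : Type*}
    (x y : MvPolynomial σ A) (hy : y ≠ 0) (e : ℕ) (q : Polynomial A) (hq : q.natDegree ≤ e) :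
    algebraMap (MvPolynomial σ A) (FractionRing (MvPolynomial σ A)) (homogEv x y e q)
      = algebraMap (MvPolynomial σ A) (FractionRing (MvPolynomial σ A)) y ^ e *
        Polynomial.aeval
          (algebraMap (MvPolynomial σ A) (FractionRing (MvPolynomial σ A)) x /
           algebraMap (MvPolynomial σ A) (FractionRing (MvPolynomial σ A)) y) q := by
  set φ := algebraMap (MvPolynomial σ A) (FractionRing (MvPolynomial σ A)) with hφ
  have hyF : φ y ≠ 0 := fun h => hy
    (IsFractionRing.injective (MvPolynomial σ A) (FractionRing (MvPolynomial σ A))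
      (show φ y = φ 0 by rw [map_zero]; exact h))
  rw [Polynomial.aeval_eq_sum_range' (Nat.lt_succ_of_le hq), homogEv, map_sum, Finset.mul_sum]
  refine Finset.sum_congr rfl fun i hi => ?_
  rw [Finset.mem_range, Nat.lt_succ_iff] at hi
  rw [map_mul, map_mul, map_pow, map_pow]
  have hC : φ (MvPolynomial.C (q.coeff i)) = algebraMap A _ (q.coeff i) := by
    rw [IsScalarTower.algebraMap_apply A (MvPolynomial σ A) (FractionRing (MvPolynomial σ A))]
    rfl
  rw [hC, Algebra.smul_def, div_pow]
  have hyi : φ y ^ i ≠ 0 := pow_ne_zero _ hyF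
  field_simp
  rw [mul_assoc, ← pow_add, Nat.sub_add_cancel hi]

private lemma homogEv_sub_C_mul {A : Type*} [CommRing A] {σ : Type*}
    (x y : MvPolynomial σ A) (e : ℕ) (q₁ q₂ : Polynomial A) (lam : A) :
    homogEv x y e (q₁ - Polynomial.C lam * q₂)
      = homogEv x y e q₁ - MvPolynomial.C lam * homogEv x y e q₂ := by
  rw [homogEv, homogEv, homogEv, Finset.mul_sum, ← Finset.sum_sub_distrib]
  refine Finset.sum_congr rfl fun i _ => ?_
  rw [Polynomial.coeff_sub, Polynomial.coeff_C_mul, map_sub, map_mul]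
  ring

private lemma homogEv_map {A B : Type*} [CommSemiring A] [CommSemiring B] {σ : Type*}
    (τ : A →+* B) (x y : MvPolynomial σ A) (e : ℕ) (q : Polynomial A) :
    MvPolynomial.map τ (homogEv x y e q)
      = homogEv (MvPolynomial.map τ x) (MvPolynomial.map τ y) e (q.map τ) := by
  rw [homogEv, homogEv, map_sum]
  refine Finset.sum_congr rfl fun i _ => ?_
  rw [map_mul, map_mul, map_pow, map_pow, MvPolynomial.map_C, Polynomial.coeff_map]

/-- If the reduced rational function `f/g` decomposes as `u(h₁/h₂)` with `deg u = m ≥ 2`,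
and `u₁ - λ·u₂` splits over the algebraic closure as `α·∏ᵢ (T - λᵢ)`, then `f - λ·g` is,
up to a nonzero constant over the algebraic closure, the product `∏ᵢ (h₁ - λᵢ·h₂)`;
in particular `f - λ·g` is reducible over the algebraic closure whenever it has degree
`d = max(deg f, deg g)` and each factor `h₁ - λᵢ·h₂` is non-constant. -/
theorem stmt_8 {K : Type*} [Field K] {n : ℕ} (hn : 1 ≤ n)
    (f g : MvPolynomial (Fin n) K) (hg : g ≠ 0) (hfg : IsRelPrime f g)
    (u₁ u₂ : Polynomial K) (hu : IsRelPrime u₁ u₂)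
    (m : ℕ) (hm : 2 ≤ m) (hmdeg : m = max u₁.natDegree u₂.natDegree)
    (h₁ h₂ : MvPolynomial (Fin n) K) (hh₂ : h₂ ≠ 0) (hh : IsRelPrime h₁ h₂)
    -- the composition identity  f/g = u₁(h₁/h₂) / u₂(h₁/h₂)  in the fraction field :
    (hu₂ne : Polynomial.aeval
        ((algebraMap (MvPolynomial (Fin n) K) (FractionRing (MvPolynomial (Fin n) K)) h₁) /
         (algebraMap (MvPolynomial (Fin n) K) (FractionRing (MvPolynomial (Fin n) K)) h₂)) u₂ ≠ 0)
    (hcomp : (algebraMap (MvPolynomial (Fin n) K) (FractionRing (MvPolynomial (Fin n) K)) f) *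
        Polynomial.aeval
          ((algebraMap (MvPolynomial (Fin n) K) (FractionRing (MvPolynomial (Fin n) K)) h₁) /
           (algebraMap (MvPolynomial (Fin n) K) (FractionRing (MvPolynomial (Fin n) K)) h₂)) u₂
      = (algebraMap (MvPolynomial (Fin n) K) (FractionRing (MvPolynomial (Fin n) K)) g) *
        Polynomial.aeval
          ((algebraMap (MvPolynomial (Fin n) K) (FractionRing (MvPolynomial (Fin n) K)) h₁) /
           (algebraMap (MvPolynomial (Fin n) K) (FractionRing (MvPolynomial (Fin n) K)) h₂)) u₁)
    (lam : K) (α : AlgebraicClosure K) (hα : α ≠ 0) (lams : Fin m → AlgebraicClosure K)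
    -- splitting of  u₁ - λ·u₂  over the algebraic closure :
    (hsplit : Polynomial.map (algebraMap K (AlgebraicClosure K)) (u₁ - Polynomial.C lam * u₂)
      = Polynomial.C α * ∏ i : Fin m, (Polynomial.X - Polynomial.C (lams i))) :
    (∃ c : AlgebraicClosure K, c ≠ 0 ∧
        MvPolynomial.map (algebraMap K (AlgebraicClosure K)) (f - MvPolynomial.C lam * g)
          = MvPolynomial.C c * ∏ i : Fin m,
              (MvPolynomial.map (algebraMap K (AlgebraicClosure K)) h₁
               - MvPolynomial.C (lams i) *
                   MvPolynomial.map (algebraMap K (AlgebraicClosure K)) h₂)) ∧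
      ((f - MvPolynomial.C lam * g).totalDegree = max f.totalDegree g.totalDegree →
       (∀ i : Fin m, 0 < (MvPolynomial.map (algebraMap K (AlgebraicClosure K)) h₁
               - MvPolynomial.C (lams i) *
                   MvPolynomial.map (algebraMap K (AlgebraicClosure K)) h₂).totalDegree) →
       ∃ a b : MvPolynomial (Fin n) (AlgebraicClosure K),
         0 < a.totalDegree ∧ 0 < b.totalDegree ∧
         MvPolynomial.map (algebraMap K (AlgebraicClosure K)) (f - MvPolynomial.C lam * g)
           = a * b) := by
  classical
  set φ := algebraMap (MvPolynomial (Fin n) K) (FractionRing (MvPolynomial (Fin n) K)) with hφdef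
  have φinj : Function.Injective φ := IsFractionRing.injective _ _
  have hy : φ h₂ ≠ 0 := fun hzz => hh₂ (φinj (show φ h₂ = φ 0 by rw [map_zero]; exact hzz))
  set H := φ h₁ / φ h₂ with hHdef
  have hdeg1 : u₁.natDegree ≤ m := hmdeg ▸ le_max_left _ _
  have hdeg2 : u₂.natDegree ≤ m := hmdeg ▸ le_max_right _ _
  have spec : ∀ (e : ℕ) (q : Polynomial K), q.natDegree ≤ e →
      φ (homogEv h₁ h₂ e q) = φ h₂ ^ e * Polynomial.aeval H q :=
    fun e q hq => homogEv_spec h₁ h₂ hh₂ e q hq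
  set N₁ := homogEv h₁ h₂ m u₁ with hN₁
  set N₂ := homogEv h₁ h₂ m u₂ with hN₂
  have hmain : f * N₂ = g * N₁ := by
    apply φinj
    rw [map_mul, map_mul, hN₁, hN₂, spec m u₁ hdeg1, spec m u₂ hdeg2]
    calc φ f * (φ h₂ ^ m * Polynomial.aeval H u₂)
        = (φ f * Polynomial.aeval H u₂) * φ h₂ ^ m := by ring
      _ = (φ g * Polynomial.aeval H u₁) * φ h₂ ^ m := by rw [hcomp]
      _ = φ g * (φ h₂ ^ m * Polynomial.aeval H u₁) := by ring
  have hN₂0 : N₂ ≠ 0 := by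
    intro h0
    apply hu₂ne
    have hs := spec m u₂ hdeg2
    rw [← hN₂, h0, map_zero] at hs
    rcases mul_eq_zero.mp hs.symm with h | h
    · exact absurd h (pow_ne_zero m hy)
    · exact h
  have hgN₂ : g ∣ N₂ := hfg.symm.dvd_of_dvd_mul_left ⟨N₁, hmain⟩
  obtain ⟨w, hw⟩ := hgN₂
  have hN₁w : N₁ = f * w := by
    have hcancel : g * (f * w) = g * N₁ := by rw [← hmain, hw]; ring
    exact (mul_left_cancel₀ hg hcancel).symm
  have hw0 : w ≠ 0 := fun h0 => hN₂0 (by rw [hw, h0, mul_zero])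
  obtain ⟨a, b, hab⟩ := isRelPrime_iff_isCoprime.mp hu
  set k := max a.natDegree b.natDegree with hk
  have hcomb : homogEv h₁ h₂ k a * N₁ + homogEv h₁ h₂ k b * N₂ = h₂ ^ (k + m) := by
    apply φinj
    rw [map_add, map_mul, map_mul, map_pow, hN₁, hN₂, spec k a (le_max_left _ _),
      spec k b (le_max_right _ _), spec m u₁ hdeg1, spec m u₂ hdeg2]
    have h1 : Polynomial.aeval H a * Polynomial.aeval H u₁
        + Polynomial.aeval H b * Polynomial.aeval H u₂ = 1 := by
      rw [← map_mul, ← map_mul, ← map_add, hab, map_one]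
    calc φ h₂ ^ k * Polynomial.aeval H a * (φ h₂ ^ m * Polynomial.aeval H u₁)
          + φ h₂ ^ k * Polynomial.aeval H b * (φ h₂ ^ m * Polynomial.aeval H u₂)
        = φ h₂ ^ (k + m) * (Polynomial.aeval H a * Polynomial.aeval H u₁
            + Polynomial.aeval H b * Polynomial.aeval H u₂) := by rw [pow_add]; ring
      _ = φ h₂ ^ (k + m) := by rw [h1, mul_one]
  have hwu : IsUnit w := by
    by_contra hwu
    obtain ⟨p, hpirr, hpw⟩ := WfDvdMonoid.exists_irreducible_factor hwu hw0
    have hp : Prime p := hpirr.prime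
    have hpN₁ : p ∣ N₁ := hN₁w ▸ hpw.mul_left f
    have hpN₂ : p ∣ N₂ := hw ▸ hpw.mul_left g
    have hph₂ : p ∣ h₂ := by
      have hd : p ∣ h₂ ^ (k + m) := hcomb ▸ dvd_add (hpN₁.mul_left _) (hpN₂.mul_left _)
      exact hp.dvd_of_dvd_pow hd
    have hmain2 : ∃ v : Polynomial K, v.natDegree = m ∧ p ∣ homogEv h₁ h₂ m v := by
      rcases max_cases u₁.natDegree u₂.natDegree with ⟨h1, _⟩ | ⟨h1, _⟩
      · exact ⟨u₁, by omega, hpN₁⟩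
      · exact ⟨u₂, by omega, hpN₂⟩
    obtain ⟨v, hvdeg, hpv⟩ := hmain2
    have hv0 : v ≠ 0 := fun h0 => by rw [h0, Polynomial.natDegree_zero] at hvdeg; omega
    have hvc : v.coeff m ≠ 0 := by
      rw [← hvdeg, ← Polynomial.leadingCoeff]
      exact Polynomial.leadingCoeff_ne_zero.mpr hv0
    have hsum : homogEv h₁ h₂ m v
        = (∑ i ∈ Finset.range m, MvPolynomial.C (v.coeff i) * h₁ ^ i * h₂ ^ (m - i))
          + MvPolynomial.C (v.coeff m) * h₁ ^ m := by
      rw [homogEv, Finset.sum_range_succ, Nat.sub_self, pow_zero, mul_one]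
    have hdvdsum : p ∣ ∑ i ∈ Finset.range m, MvPolynomial.C (v.coeff i) * h₁ ^ i * h₂ ^ (m - i) := by
      refine dvd_trans hph₂ (Finset.dvd_sum fun i hi => ?_)
      rw [Finset.mem_range] at hi
      exact ⟨MvPolynomial.C (v.coeff i) * h₁ ^ i * h₂ ^ (m - i - 1), by
        have hpow : h₂ ^ (m - i) = h₂ * h₂ ^ (m - i - 1) := by
          rw [← pow_succ']; congr 1; omega
        rw [hpow]; ring⟩
    have hpCh : p ∣ MvPolynomial.C (v.coeff m) * h₁ ^ m := by
      have hd := dvd_sub hpv hdvdsum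
      rw [hsum, add_sub_cancel_left] at hd
      exact hd
    have hph₁ : p ∣ h₁ := by
      rcases hp.2.2 _ _ hpCh with hc | hc
      · exact absurd (isUnit_of_dvd_unit hc ((isUnit_iff_ne_zero.2 hvc).map MvPolynomial.C))
          hpirr.not_isUnit
      · exact hp.dvd_of_dvd_pow hc
    exact hpirr.not_isUnit (hh hph₁ hph₂)
  obtain ⟨e, he0, hwe⟩ := mv_isUnit_eq_C hwu
  set P := u₁ - Polynomial.C lam * u₂ with hPdef
  have hNP : homogEv h₁ h₂ m P = (f - MvPolynomial.C lam * g) * w := by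
    rw [hPdef, homogEv_sub_C_mul, ← hN₁, ← hN₂, hN₁w, hw]; ring
  set σK := algebraMap K (AlgebraicClosure K) with hσKdef
  have hσinj : Function.Injective σK := RingHom.injective σK
  set h₁' := MvPolynomial.map σK h₁ with hh₁'
  set h₂' := MvPolynomial.map σK h₂ with hh₂'def
  have hPdeg : (P.map σK).natDegree ≤ m := by
    refine le_trans Polynomial.natDegree_map_le ?_
    rw [hPdef]
    refine le_trans (Polynomial.natDegree_sub_le _ _) ?_
    refine max_le hdeg1 (le_trans (Polynomial.natDegree_C_mul_le _ _) hdeg2)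
  have hh₂'0 : h₂' ≠ 0 := by
    intro h0
    exact hh₂ ((MvPolynomial.map_injective σK hσinj) (by rw [← hh₂'def, h0, map_zero]))
  have hclosure : homogEv h₁' h₂' m (P.map σK)
      = MvPolynomial.C α * ∏ i : Fin m, (h₁' - MvPolynomial.C (lams i) * h₂') := by
    apply IsFractionRing.injective (MvPolynomial (Fin n) (AlgebraicClosure K))
      (FractionRing (MvPolynomial (Fin n) (AlgebraicClosure K)))
    set φ' := algebraMap (MvPolynomial (Fin n) (AlgebraicClosure K))
      (FractionRing (MvPolynomial (Fin n) (AlgebraicClosure K))) with hφ'def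
    have hy' : φ' h₂' ≠ 0 := fun hzz => hh₂'0
      ((IsFractionRing.injective _ _) (show φ' h₂' = φ' 0 by rw [map_zero]; exact hzz))
    rw [homogEv_spec h₁' h₂' hh₂'0 m _ hPdeg, hsplit]
    have hCtower : ∀ x : AlgebraicClosure K, φ' (MvPolynomial.C x)
        = algebraMap (AlgebraicClosure K)
            (FractionRing (MvPolynomial (Fin n) (AlgebraicClosure K))) x := by
      intro x
      rw [IsScalarTower.algebraMap_apply (AlgebraicClosure K)
        (MvPolynomial (Fin n) (AlgebraicClosure K))
        (FractionRing (MvPolynomial (Fin n) (AlgebraicClosure K)))]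
      rfl
    rw [map_mul, map_mul, map_prod, map_prod, Polynomial.aeval_C, hCtower]
    have hprod : φ' h₂' ^ m = ∏ _i : Fin m, φ' h₂' := by
      rw [Finset.prod_const, Finset.card_univ, Fintype.card_fin]
    rw [hprod, mul_left_comm, ← Finset.prod_mul_distrib]
    congr 1
    refine Finset.prod_congr rfl fun i _ => ?_
    rw [map_sub, map_sub, map_mul, Polynomial.aeval_X, Polynomial.aeval_C, hCtower]
    field_simp
    rw [← hφ'def]
    linear_combination φ' h₁' * mul_inv_cancel₀ hy'
  have hψw : MvPolynomial.map σK w = MvPolynomial.C (σK e) := by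
    rw [hwe, MvPolynomial.map_C]
  have hσe0 : σK e ≠ 0 := fun h0 => he0 (hσinj (show σK e = σK 0 by rw [map_zero]; exact h0))
  have hCe0 : (MvPolynomial.C (σK e) : MvPolynomial (Fin n) (AlgebraicClosure K)) ≠ 0 :=
    fun h0 => hσe0 (by simpa using congrArg (MvPolynomial.coeff 0) h0)
  have key : MvPolynomial.map σK (f - MvPolynomial.C lam * g) * MvPolynomial.C (σK e)
      = MvPolynomial.C α * ∏ i : Fin m, (h₁' - MvPolynomial.C (lams i) * h₂') := by
    calc MvPolynomial.map σK (f - MvPolynomial.C lam * g) * MvPolynomial.C (σK e)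
        = MvPolynomial.map σK ((f - MvPolynomial.C lam * g) * w) := by
          rw [map_mul, hψw]
      _ = MvPolynomial.map σK (homogEv h₁ h₂ m P) := by rw [hNP]
      _ = homogEv h₁' h₂' m (P.map σK) := by
          rw [homogEv_map σK h₁ h₂ m P, hh₁', hh₂'def]
      _ = _ := hclosure
  have hex : ∃ c : AlgebraicClosure K, c ≠ 0 ∧
      MvPolynomial.map σK (f - MvPolynomial.C lam * g)
        = MvPolynomial.C c * ∏ i : Fin m, (h₁' - MvPolynomial.C (lams i) * h₂') := by
    refine ⟨α * (σK e)⁻¹, mul_ne_zero hα (inv_ne_zero hσe0), ?_⟩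
    apply mul_right_cancel₀ hCe0
    rw [key, mul_right_comm, ← MvPolynomial.C_mul]
    have harith : α * (σK e)⁻¹ * σK e = α := by field_simp
    rw [harith]
  refine ⟨hex, fun _ hfac => ?_⟩
  obtain ⟨c, hc0, hceq⟩ := hex
  set Fi : Fin m → MvPolynomial (Fin n) (AlgebraicClosure K) :=
    fun i => h₁' - MvPolynomial.C (lams i) * h₂' with hFidef
  have hFi0 : ∀ i, Fi i ≠ 0 := by
    intro i h0
    have hthis := hfac i
    have h0' : h₁' - MvPolynomial.C (lams i) * h₂' = 0 := h0
    rw [h0'] at hthis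
    simp at hthis
  have hCc0 : (MvPolynomial.C c : MvPolynomial (Fin n) (AlgebraicClosure K)) ≠ 0 :=
    fun h0 => hc0 (by simpa using congrArg (MvPolynomial.coeff 0) h0)
  set i0 : Fin m := ⟨0, by omega⟩ with hi0
  set i1 : Fin m := ⟨1, by omega⟩ with hi1
  have hmem1 : i1 ∈ Finset.univ.erase i0 :=
    Finset.mem_erase.mpr ⟨by rw [hi0, hi1]; exact fun h => by simpa using congrArg Fin.val h,
      Finset.mem_univ _⟩
  have hsplit1 : ∏ i : Fin m, Fi i = Fi i0 * ∏ i ∈ Finset.univ.erase i0, Fi i :=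
    (Finset.mul_prod_erase Finset.univ Fi (Finset.mem_univ i0)).symm
  have hprodne : ∏ i ∈ Finset.univ.erase i0, Fi i ≠ 0 :=
    Finset.prod_ne_zero_iff.mpr fun i _ => hFi0 i
  have hrestne : ∏ i ∈ (Finset.univ.erase i0).erase i1, Fi i ≠ 0 :=
    Finset.prod_ne_zero_iff.mpr fun i _ => hFi0 i
  refine ⟨MvPolynomial.C c * Fi i0, ∏ i ∈ Finset.univ.erase i0, Fi i, ?_, ?_, ?_⟩
  · rw [tdeg_mul_eq hCc0 (hFi0 i0), MvPolynomial.totalDegree_C, zero_add]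
    exact hfac i0
  · rw [← Finset.mul_prod_erase _ Fi hmem1, tdeg_mul_eq (hFi0 i1) hrestne]
    have h1 : 0 < (Fi i1).totalDegree := hfac i1
    omega
  · rw [hceq]
    rw [show (∏ i : Fin m, (h₁' - MvPolynomial.C (lams i) * h₂')) = ∏ i : Fin m, Fi i from rfl,
      hsplit1]
    ring
end

section
/- Let K be a field and f, g ∈ K[X₁,…,X_n] coprime with g ≠ 0 and d = max(deg f, deg g) ≥ 1. If the set σ(f,g) = { λ in the algebraic closure of K : deg(f − λg) < d or f − λg is reducible over the algebraic closure } is infinite, then the polynomial f − T·g is reducible in L[X₁,…,X_n], where L is the algebraic closure of K(T). (Contrapositive of (iii) ⇒ (ii) combined with finiteness of the spectrum.) -/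
open MvPolynomial
namespace Stmt9Aux




variable {σ : Type*}

lemma degree_sum_eq (m : σ →₀ ℕ) : (m.sum fun _ e => e) = m.degree := by
  rw [Finsupp.degree]; rfl

lemma finsupp_degree_add (u v : σ →₀ ℕ) : (u + v).degree = u.degree + v.degree := by
  classical
  rw [← degree_sum_eq, ← degree_sum_eq, ← degree_sum_eq]
  exact Finsupp.sum_add_index' (fun _ => rfl) (fun _ _ _ => rfl)

lemma coeff_zero_of_degree_gt {R : Type*} [CommSemiring R] {p : MvPolynomial σ R}
    {m : σ →₀ ℕ} (h : p.totalDegree < m.degree) : coeff m p = 0 := by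
  apply coeff_eq_zero_of_totalDegree_lt
  rwa [← Finsupp.degree_apply]

lemma exists_top_monomial {R : Type*} [CommSemiring R] {p : MvPolynomial σ R} (hp : p ≠ 0) :
    ∃ m ∈ p.support, m.degree = p.totalDegree := by
  obtain ⟨m, hm, hms⟩ := Finset.exists_mem_eq_sup p.support
    (MvPolynomial.support_nonempty.mpr hp) (fun s => s.sum fun _ e => e)
  exact ⟨m, hm, by rw [← degree_sum_eq, ← hms]; rfl⟩

lemma totalDegree_mul_eq {R : Type*} [CommRing R] [IsDomain R] {p q : MvPolynomial σ R}
    (hp : p ≠ 0) (hq : q ≠ 0) :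
    (p * q).totalDegree = p.totalDegree + q.totalDegree := by
  refine le_antisymm (totalDegree_mul p q) ?_
  set dp := p.totalDegree with hdp
  set dq := q.totalDegree with hdq
  have key : ∀ m : σ →₀ ℕ, m.degree = dp + dq →
      coeff m (p * q) = coeff m (homogeneousComponent dp p * homogeneousComponent dq q) := by
    intro m hm
    classical
    rw [coeff_mul, coeff_mul]
    refine Finset.sum_congr rfl ?_
    rintro ⟨u, v⟩ huv
    have huvm : u + v = m := Finset.HasAntidiagonal.mem_antidiagonal.mp huv
    have hdeg : u.degree + v.degree = dp + dq := by
      rw [← finsupp_degree_add, huvm, hm]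
    simp only [coeff_homogeneousComponent]
    by_cases hu : u.degree = dp
    · have hv : v.degree = dq := by omega
      rw [if_pos hu, if_pos hv]
    · rw [if_neg hu, zero_mul]
      by_cases hu' : u.degree < dp
      · have hv' : dq < v.degree := by omega
        rw [coeff_zero_of_degree_gt (p := q) hv', mul_zero]
      · have hgt : dp < u.degree := by omega
        rw [coeff_zero_of_degree_gt (p := p) hgt, zero_mul]
  obtain ⟨mp, hmp, hmpd⟩ := exists_top_monomial hp
  obtain ⟨mq, hmq, hmqd⟩ := exists_top_monomial hq
  have hP : homogeneousComponent dp p ≠ 0 := by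
    intro h0
    have := coeff_homogeneousComponent (σ := σ) dp p mp
    rw [h0, coeff_zero, if_pos hmpd] at this
    exact (mem_support_iff.mp hmp) this.symm
  have hQ : homogeneousComponent dq q ≠ 0 := by
    intro h0
    have := coeff_homogeneousComponent (σ := σ) dq q mq
    rw [h0, coeff_zero, if_pos hmqd] at this
    exact (mem_support_iff.mp hmq) this.symm
  have hPQ : homogeneousComponent dp p * homogeneousComponent dq q ≠ 0 := mul_ne_zero hP hQ
  obtain ⟨m, hm, _⟩ := exists_top_monomial hPQ
  have hhom : ((homogeneousComponent dp p) * (homogeneousComponent dq q)).IsHomogeneous (dp + dq) :=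
    (homogeneousComponent_isHomogeneous dp p).mul (homogeneousComponent_isHomogeneous dq q)
  have hmdeg : m.degree = dp + dq := by
    have := hhom (mem_support_iff.mp hm)
    rw [Finsupp.degree_eq_weight_one]; exact this
  have : coeff m (p * q) ≠ 0 := by
    rw [key m hmdeg]
    exact mem_support_iff.mp hm
  calc dp + dq = m.degree := hmdeg.symm
    _ = m.sum fun _ e => e := (degree_sum_eq m).symm
    _ ≤ (p * q).totalDegree := le_totalDegree (mem_support_iff.mpr this)

lemma totalDegree_map_eq_of_injective {R S : Type*} [CommSemiring R] [CommSemiring S]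
    (φ : R →+* S) (h : Function.Injective φ) (p : MvPolynomial σ R) :
    (map φ p).totalDegree = p.totalDegree := by
  rw [totalDegree, totalDegree, support_map_of_injective _ h]

lemma totalDegree_C_mul {R : Type*} [Field R] {c : R} (hc : c ≠ 0) (p : MvPolynomial σ R) :
    (C c * p).totalDegree = p.totalDegree := by
  refine le_antisymm ((totalDegree_mul _ _).trans (by simp)) ?_
  conv_lhs => rw [show p = C c⁻¹ * (C c * p) by rw [← mul_assoc, ← C_mul, inv_mul_cancel₀ hc, C_1, one_mul]]
  exact (totalDegree_mul _ _).trans (by simp)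






/-- The finset of monomials in `Fin n` variables with all exponents `≤ d`. -/
noncomputable def monBdd (n d : ℕ) : Finset (Fin n →₀ ℕ) :=
  (Finset.univ : Finset (Fin n → Fin (d + 1))).image
    (fun v => Finsupp.equivFunOnFinite.symm (fun j => (v j : ℕ)))

lemma mem_monBdd {n d : ℕ} {m : Fin n →₀ ℕ} (h : m.degree ≤ d) : m ∈ monBdd n d := by
  have hco : ∀ j, m j ≤ d := by
    intro j
    refine le_trans ?_ h
    by_cases hj : m j = 0
    · simp [hj]
    · rw [Finsupp.degree]
      exact Finset.single_le_sum (fun _ _ => Nat.zero_le _) (Finsupp.mem_support_iff.mpr hj)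
  refine Finset.mem_image.mpr ⟨fun j => ⟨m j, Nat.lt_succ_of_le (hco j)⟩, Finset.mem_univ _, ?_⟩
  ext j
  simp



variable {k : Type*} [CommSemiring k] {n : ℕ}

/-- polynomial with prescribed coefficients on a finset of monomials -/
noncomputable def polyOf (S : Finset (Fin n →₀ ℕ)) (c : {x // x ∈ S} → k) :
    MvPolynomial (Fin n) k :=
  ∑ m ∈ S.attach, monomial (m : Fin n →₀ ℕ) (c m)

lemma coeff_polyOf (S : Finset (Fin n →₀ ℕ)) (c : {x // x ∈ S} → k) {m : Fin n →₀ ℕ}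
    (hm : m ∈ S) : coeff m (polyOf S c) = c ⟨m, hm⟩ := by
  classical
  rw [polyOf, coeff_sum]
  rw [Finset.sum_eq_single (⟨m, hm⟩ : {x // x ∈ S})]
  · simp [coeff_monomial]
  · rintro ⟨m', hm'⟩ _ hne
    rw [coeff_monomial, if_neg]
    intro h; exact hne (Subtype.ext h)
  · intro habs; exact absurd (Finset.mem_attach _ _) habs

lemma coeff_polyOf_of_not_mem (S : Finset (Fin n →₀ ℕ)) (c : {x // x ∈ S} → k) {m : Fin n →₀ ℕ}
    (hm : m ∉ S) : coeff m (polyOf S c) = 0 := by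
  classical
  rw [polyOf, coeff_sum]
  apply Finset.sum_eq_zero
  rintro ⟨m', hm'⟩ _
  rw [coeff_monomial, if_neg]
  intro h; exact hm (h ▸ hm')

lemma coeff_polyOf_mul (S : Finset (Fin n →₀ ℕ)) (c d : {x // x ∈ S} → k) (m : Fin n →₀ ℕ) :
    coeff m (polyOf S c * polyOf S d) =
      ∑ p ∈ (S.attach ×ˢ S.attach).filter
          (fun p => (p.1 : Fin n →₀ ℕ) + (p.2 : Fin n →₀ ℕ) = m),
        c p.1 * d p.2 := by
  classical
  rw [polyOf, polyOf, Finset.sum_mul_sum]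
  have : ∀ (i j : {x // x ∈ S}),
      (monomial (i : Fin n →₀ ℕ) (c i)) * (monomial (j : Fin n →₀ ℕ) (d j))
        = monomial ((i : Fin n →₀ ℕ) + (j : Fin n →₀ ℕ)) (c i * d j) := fun i j => by
    rw [monomial_mul]
  simp_rw [this]
  rw [← Finset.sum_product', coeff_sum, Finset.sum_filter]
  exact Finset.sum_congr rfl fun p _ => by rw [coeff_monomial]





variable {k : Type*} [CommSemiring k] {n : ℕ}

/-- The coefficient-matching equation at monomial `m` for a factorization of `F` into two
factors supported on `S`. -/
noncomputable def genEq {k : Type*} [CommRing k] (S : Finset (Fin n →₀ ℕ))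
    (F : MvPolynomial (Fin n) k) (m : Fin n →₀ ℕ) :
    MvPolynomial ({x // x ∈ S} ⊕ {x // x ∈ S}) k := by
  classical
  exact (∑ p ∈ (S.attach ×ˢ S.attach).filter
      (fun p => (p.1 : Fin n →₀ ℕ) + (p.2 : Fin n →₀ ℕ) = m),
    X (Sum.inl p.1) * X (Sum.inr p.2)) - C (coeff m F)

lemma eval_genEq {k : Type*} [CommRing k] (S : Finset (Fin n →₀ ℕ))
    (F : MvPolynomial (Fin n) k) (m : Fin n →₀ ℕ)
    (w : ({x // x ∈ S} ⊕ {x // x ∈ S}) → k) :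
    eval w (genEq S F m) =
      (∑ p ∈ (S.attach ×ˢ S.attach).filter
          (fun p => (p.1 : Fin n →₀ ℕ) + (p.2 : Fin n →₀ ℕ) = m),
        w (Sum.inl p.1) * w (Sum.inr p.2)) - coeff m F := by
  classical
  rw [genEq]
  simp [map_sub, map_sum]

lemma eval₂Hom_genEq {k E : Type*} [CommRing k] [CommRing E] (ψ : k →+* E)
    (S : Finset (Fin n →₀ ℕ)) (F : MvPolynomial (Fin n) k) (m : Fin n →₀ ℕ)
    (w : ({x // x ∈ S} ⊕ {x // x ∈ S}) → E) :
    eval₂Hom ψ w (genEq S F m) =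
      (∑ p ∈ (S.attach ×ˢ S.attach).filter
          (fun p => (p.1 : Fin n →₀ ℕ) + (p.2 : Fin n →₀ ℕ) = m),
        w (Sum.inl p.1) * w (Sum.inr p.2)) - ψ (coeff m F) := by
  classical
  rw [genEq]
  simp [map_sub, map_sum]




lemma support_subset_monBdd {k : Type*} [CommSemiring k] {n d : ℕ} {p : MvPolynomial (Fin n) k}
    (h : p.totalDegree ≤ d) : p.support ⊆ monBdd n d := by
  intro m hm
  apply mem_monBdd
  rw [← degree_sum_eq]
  exact le_trans (le_totalDegree hm) h

lemma descend {k E : Type*} [Field k] [IsAlgClosed k] [Field E] {n : ℕ} (ψ : k →+* E)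
    {F : MvPolynomial (Fin n) k} {A B : MvPolynomial (Fin n) E}
    (hAB : MvPolynomial.map ψ F = A * B) (hA : 0 < A.totalDegree) (hB : 0 < B.totalDegree) :
    ∃ a b : MvPolynomial (Fin n) k, 0 < a.totalDegree ∧ 0 < b.totalDegree ∧ F = a * b := by
  classical
  have hA0 : A ≠ 0 := fun h => by simp [h] at hA
  have hB0 : B ≠ 0 := fun h => by simp [h] at hB
  have hF0 : F ≠ 0 := by
    intro h
    rw [h, map_zero] at hAB
    rcases mul_eq_zero.mp hAB.symm with h | h
    · exact hA0 h
    · exact hB0 h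
  have hinj : Function.Injective ψ := ψ.injective
  set dF := F.totalDegree with hdF
  have hsum : A.totalDegree + B.totalDegree = dF := by
    rw [hdF, ← totalDegree_map_eq_of_injective ψ hinj F, hAB, totalDegree_mul_eq hA0 hB0]
  set S := monBdd n dF with hS
  have hS0 : (0 : Fin n →₀ ℕ) ∈ S := mem_monBdd (by simp [Finsupp.degree])
  have hsuppF : F.support ⊆ S := support_subset_monBdd le_rfl
  have hsuppA : A.support ⊆ S := support_subset_monBdd (by omega)
  have hsuppB : B.support ⊆ S := support_subset_monBdd (by omega)
  set T := Finset.image (fun q : (Fin n →₀ ℕ) × (Fin n →₀ ℕ) => q.1 + q.2) (S ×ˢ S) with hT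
  have hST : S ⊆ T := by
    intro m hm
    exact Finset.mem_image.mpr ⟨(m, 0), Finset.mem_product.mpr ⟨hm, hS0⟩, add_zero m⟩
  set I : Ideal (MvPolynomial ({x // x ∈ S} ⊕ {x // x ∈ S}) k) :=
    Ideal.span ↑(T.image (genEq S F)) with hI
  -- Every zero of I gives a factorization of F
  have C1 : ∀ w ∈ zeroLocus k I, polyOf S (w ∘ Sum.inl) * polyOf S (w ∘ Sum.inr) = F := by
    intro w hw
    ext m
    by_cases hm : m ∈ T
    · have hgen : genEq S F m ∈ I :=
        Ideal.subset_span (Finset.mem_coe.mpr (Finset.mem_image_of_mem _ hm))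
      have h0 : eval w _ = 0 := hw _ hgen
      rw [eval_genEq] at h0
      have := sub_eq_zero.mp h0
      rw [coeff_polyOf_mul]
      simpa using this
    · rw [coeff_polyOf_mul]
      have hfil : (S.attach ×ˢ S.attach).filter
          (fun p => (p.1 : Fin n →₀ ℕ) + (p.2 : Fin n →₀ ℕ) = m) = ∅ := by
        refine Finset.filter_eq_empty_iff.mpr ?_
        rintro ⟨p1, p2⟩ _ heq
        exact hm (Finset.mem_image.mpr ⟨(↑p1, ↑p2),
          Finset.mem_product.mpr ⟨p1.2, p2.2⟩, heq⟩)
      rw [hfil, Finset.sum_empty]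
      have : m ∉ F.support := fun hmem => hm (hST (hsuppF hmem))
      rw [notMem_support_iff.mp this]
  -- the witness point over E
  set ws : ({x // x ∈ S} ⊕ {x // x ∈ S}) → E :=
    Sum.elim (fun m => coeff (m : Fin n →₀ ℕ) A) (fun m => coeff (m : Fin n →₀ ℕ) B) with hws
  set φ := eval₂Hom ψ ws with hφdef
  have C2 : ∀ m : Fin n →₀ ℕ, φ (genEq S F m) = 0 := by
    intro m
    rw [hφdef, eval₂Hom_genEq]
    have hψF : ψ (coeff m F) = coeff m (A * B) := by rw [← coeff_map, hAB]
    rw [hψF, coeff_mul, sub_eq_zero]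
    -- bridge the two sums
    have step1 : (∑ p ∈ (S.attach ×ˢ S.attach).filter
          (fun p => (p.1 : Fin n →₀ ℕ) + (p.2 : Fin n →₀ ℕ) = m),
        ws (Sum.inl p.1) * ws (Sum.inr p.2))
        = ∑ q ∈ (S ×ˢ S).filter (fun q => q.1 + q.2 = m), coeff q.1 A * coeff q.2 B := by
      rw [Finset.sum_filter, Finset.sum_filter]
      rw [Finset.sum_product, Finset.sum_product]
      rw [← Finset.sum_attach S (fun x => ∑ y ∈ S,
        if x + y = m then coeff x A * coeff y B else 0)]
      refine Finset.sum_congr rfl fun p _ => ?_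
      rw [← Finset.sum_attach S (fun y => if (p : Fin n →₀ ℕ) + y = m
        then coeff (p : Fin n →₀ ℕ) A * coeff y B else 0)]
      refine Finset.sum_congr rfl fun q _ => ?_
      simp [hws]
    rw [step1]
    refine Finset.sum_subset ?_ ?_
    · intro q hq
      rw [Finset.HasAntidiagonal.mem_antidiagonal]
      exact (Finset.mem_filter.mp hq).2
    · intro q hq hq'
      have hqm : q.1 + q.2 = m := Finset.HasAntidiagonal.mem_antidiagonal.mp hq
      have : q.1 ∉ S ∨ q.2 ∉ S := by
        by_contra hcon
        push_neg at hcon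
        exact hq' (Finset.mem_filter.mpr ⟨Finset.mem_product.mpr ⟨hcon.1, hcon.2⟩, hqm⟩)
      rcases this with h | h
      · rw [notMem_support_iff.mp (fun hc => h (hsuppA hc)), zero_mul]
      · rw [notMem_support_iff.mp (fun hc => h (hsuppB hc)), mul_zero]
  -- positive-degree monomials of A and B
  obtain ⟨m₁, hm₁sup, hm₁deg⟩ := exists_top_monomial hA0
  obtain ⟨m₂, hm₂sup, hm₂deg⟩ := exists_top_monomial hB0
  have hm₁S : m₁ ∈ S := hsuppA hm₁sup
  have hm₂S : m₂ ∈ S := hsuppB hm₂sup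
  set h : MvPolynomial ({x // x ∈ S} ⊕ {x // x ∈ S}) k :=
    X (Sum.inl ⟨m₁, hm₁S⟩) * X (Sum.inr ⟨m₂, hm₂S⟩) with hh
  by_cases hcase : ∃ w ∈ zeroLocus k I, eval w h ≠ 0
  · obtain ⟨w, hwz, hwh⟩ := hcase
    rw [hh, map_mul, eval_X, eval_X] at hwh
    have h1 : w (Sum.inl ⟨m₁, hm₁S⟩) ≠ 0 := fun hc => hwh (by rw [hc, zero_mul])
    have h2 : w (Sum.inr ⟨m₂, hm₂S⟩) ≠ 0 := fun hc => hwh (by rw [hc, mul_zero])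
    refine ⟨polyOf S (w ∘ Sum.inl), polyOf S (w ∘ Sum.inr), ?_, ?_, (C1 w hwz).symm⟩
    · have hco : coeff m₁ (polyOf S (w ∘ Sum.inl)) ≠ 0 := by
        rw [coeff_polyOf S _ hm₁S]; exact h1
      calc 0 < m₁.degree := by
              rw [hm₁deg]; exact hA
        _ = m₁.sum fun _ e => e := (degree_sum_eq m₁).symm
        _ ≤ _ := le_totalDegree (mem_support_iff.mpr hco)
    · have hco : coeff m₂ (polyOf S (w ∘ Sum.inr)) ≠ 0 := by
        rw [coeff_polyOf S _ hm₂S]; exact h2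
      calc 0 < m₂.degree := by
              rw [hm₂deg]; exact hB
        _ = m₂.sum fun _ e => e := (degree_sum_eq m₂).symm
        _ ≤ _ := le_totalDegree (mem_support_iff.mpr hco)
  · push_neg at hcase
    exfalso
    have hmem : h ∈ vanishingIdeal k (zeroLocus k I) := fun x hx => hcase x hx
    rw [vanishingIdeal_zeroLocus_eq_radical] at hmem
    obtain ⟨N, hN⟩ := hmem
    have hker : I ≤ RingHom.ker φ := by
      rw [hI, Ideal.span_le]
      intro x hx
      obtain ⟨m, _, rfl⟩ := Finset.mem_image.mp (Finset.mem_coe.mp hx)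
      exact RingHom.mem_ker.mpr (C2 m)
    have hφh : φ h ^ N = 0 := by
      have := hker hN
      rw [RingHom.mem_ker, map_pow] at this
      exact this
    have hφh' : φ h = coeff m₁ A * coeff m₂ B := by
      rw [hh, map_mul, hφdef, eval₂Hom_X', eval₂Hom_X', hws]
      simp
    have hne : φ h ≠ 0 := by
      rw [hφh']
      exact mul_ne_zero (mem_support_iff.mp hm₁sup) (mem_support_iff.mp hm₂sup)
    rcases Nat.eq_zero_or_pos N with rfl | hNpos
    · rw [pow_zero] at hφh; exact one_ne_zero hφh
    · exact hne (pow_eq_zero_iff hNpos.ne' |>.mp hφh)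

end Stmt9Aux

namespace Stmt9AuxG

lemma germ_ne_zero {α β : Type*} [CommRing β] (U : Ultrafilter α) (x : α → β)
    (h : {i | x i = 0} ∉ U) :
    Filter.Germ.coeRingHom (U : Filter α) x ≠ 0 := by
  intro h0
  have : (x : Filter.Germ (U : Filter α) β) = ((0 : α → β) : Filter.Germ (U : Filter α) β) := by
    simpa [Filter.Germ.coe_coeRingHom] using h0
  have hev : x =ᶠ[(U : Filter α)] (0 : α → β) := Filter.Germ.coe_eq.mp this
  apply h
  have : {i | x i = (0 : α → β) i} ∈ (U : Filter α) := hev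
  simpa using this

end Stmt9AuxG

open Stmt9Aux Stmt9AuxG MvPolynomial




/-- If the spectrum `σ(f,g)` of a reduced rational function `f/g` is infinite, then
`f - T·g` is reducible over the algebraic closure of `K(T)`. -/
theorem stmt_9 {K : Type*} [Field K] {n : ℕ}
    (f g : MvPolynomial (Fin n) K) (hg : g ≠ 0) (hfg : IsRelPrime f g)
    (d : ℕ) (hd : d = max f.totalDegree g.totalDegree) (hd1 : 1 ≤ d)
    (hspec : Set.Infinite {lam : AlgebraicClosure K |
      (MvPolynomial.map (algebraMap K (AlgebraicClosure K)) f
        - MvPolynomial.C lam * MvPolynomial.map (algebraMap K (AlgebraicClosure K)) g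
          ).totalDegree < d ∨
      ∃ a b : MvPolynomial (Fin n) (AlgebraicClosure K),
        0 < a.totalDegree ∧ 0 < b.totalDegree ∧
        MvPolynomial.map (algebraMap K (AlgebraicClosure K)) f
          - MvPolynomial.C lam * MvPolynomial.map (algebraMap K (AlgebraicClosure K)) g
          = a * b}) :
    ∃ a b : MvPolynomial (Fin n) (AlgebraicClosure (RatFunc K)),
      0 < a.totalDegree ∧ 0 < b.totalDegree ∧
      MvPolynomial.map ((algebraMap (RatFunc K) (AlgebraicClosure (RatFunc K))).comp
          (algebraMap K (RatFunc K))) f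
        - MvPolynomial.C (algebraMap (RatFunc K) (AlgebraicClosure (RatFunc K)) RatFunc.X) *
          MvPolynomial.map ((algebraMap (RatFunc K) (AlgebraicClosure (RatFunc K))).comp
            (algebraMap K (RatFunc K))) g
        = a * b := by
  classical
  set fb := MvPolynomial.map (algebraMap K (AlgebraicClosure K)) f with hfbdef
  set gb := MvPolynomial.map (algebraMap K (AlgebraicClosure K)) g with hgbdef
  have hak : Function.Injective (algebraMap K (AlgebraicClosure K)) :=
    (algebraMap K (AlgebraicClosure K)).injective
  have hfbdeg : fb.totalDegree = f.totalDegree := totalDegree_map_eq_of_injective _ hak f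
  have hgbdeg : gb.totalDegree = g.totalDegree := totalDegree_map_eq_of_injective _ hak g
  -- uniform degree bound on the pencil
  have hCg : ∀ lam : AlgebraicClosure K, (C lam * gb).totalDegree ≤ g.totalDegree := fun lam =>
    calc (C lam * gb).totalDegree ≤ (C lam).totalDegree + gb.totalDegree := totalDegree_mul _ _
      _ = g.totalDegree := by rw [totalDegree_C, hgbdeg, zero_add]
  have hFd : ∀ lam : AlgebraicClosure K, (fb - C lam * gb).totalDegree ≤ d := by
    intro lam
    refine (totalDegree_sub _ _).trans (max_le ?_ ?_)
    · rw [hfbdeg, hd]; exact le_max_left _ _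
    · exact (hCg lam).trans (hd ▸ le_max_right _ _)
  -- the set of `lam` where the degree drops is a subsingleton
  have hDsub : {lam : AlgebraicClosure K | (fb - C lam * gb).totalDegree < d}.Subsingleton := by
    intro x hx y hy
    by_contra hxy
    have hdiff : (fb - C x * gb) - (fb - C y * gb) = C (y - x) * gb := by
      rw [map_sub]; ring
    have h1 : (C (y - x) * gb).totalDegree < d := by
      rw [← hdiff]
      exact lt_of_le_of_lt (totalDegree_sub _ _) (max_lt hx hy)
    have hyx : y - x ≠ 0 := sub_ne_zero.mpr (Ne.symm hxy)
    rw [totalDegree_C_mul hyx, hgbdeg] at h1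
    have h2 : f.totalDegree < d := by
      have hfbeq : fb = (fb - C x * gb) + C x * gb := by ring
      have h3 : fb.totalDegree < d := by
        rw [hfbeq]
        exact lt_of_le_of_lt (totalDegree_add _ _)
          (max_lt hx (lt_of_le_of_lt (hCg x) h1))
      rwa [hfbdeg] at h3
    have := max_lt h2 h1
    rw [← hd] at this
    exact lt_irrefl _ this
  have hDfin : Set.Finite {lam : AlgebraicClosure K | (fb - C lam * gb).totalDegree < d} :=
    hDsub.finite
  have hRinf := hspec.diff hDfin
  have hfac : ∀ lam : AlgebraicClosure K,
      lam ∈ ({lam : AlgebraicClosure K |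
        (fb - C lam * gb).totalDegree < d ∨
        ∃ a b : MvPolynomial (Fin n) (AlgebraicClosure K),
          0 < a.totalDegree ∧ 0 < b.totalDegree ∧ fb - C lam * gb = a * b}
        \ {lam : AlgebraicClosure K | (fb - C lam * gb).totalDegree < d}) →
      ∃ a b : MvPolynomial (Fin n) (AlgebraicClosure K),
        0 < a.totalDegree ∧ 0 < b.totalDegree ∧ fb - C lam * gb = a * b := by
    rintro lam ⟨hs, hns⟩
    exact hs.resolve_left hns
  set e := hRinf.natEmbedding with hedef
  set lam : ℕ → AlgebraicClosure K := fun i => (e i : AlgebraicClosure K) with hlamdef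
  have hlaminj : Function.Injective lam :=
    Subtype.coe_injective.comp e.injective
  choose a b ha hb hab using fun i => hfac (lam i) (e i).2
  have ha0 : ∀ i, a i ≠ 0 := fun i h0 => by
    have := ha i; rw [h0, totalDegree_zero] at this; exact lt_irrefl _ this
  have hb0 : ∀ i, b i ≠ 0 := fun i h0 => by
    have := hb i; rw [h0, totalDegree_zero] at this; exact lt_irrefl _ this
  have hdeg : ∀ i, (a i).totalDegree ≤ d ∧ (b i).totalDegree ≤ d := by
    intro i
    have hmul := totalDegree_mul_eq (ha0 i) (hb0 i)
    rw [← hab i] at hmul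
    have h4 := hFd (lam i)
    omega
  -- ultraproduct stage
  set U := Filter.hyperfilter ℕ with hUdef
  set Θ : (ℕ → AlgebraicClosure K) →+* Filter.Germ (U : Filter ℕ) (AlgebraicClosure K) :=
    Filter.Germ.coeRingHom _ with hΘdef
  set cM : AlgebraicClosure K →+* Filter.Germ (U : Filter ℕ) (AlgebraicClosure K) :=
    Θ.comp (Pi.constRingHom ℕ (AlgebraicClosure K)) with hcMdef
  set t : Filter.Germ (U : Filter ℕ) (AlgebraicClosure K) := Θ lam with htdef
  set S := monBdd n d with hSdef
  have hsuppa : ∀ i, (a i).support ⊆ S := fun i => support_subset_monBdd (hdeg i).1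
  have hsuppb : ∀ i, (b i).support ⊆ S := fun i => support_subset_monBdd (hdeg i).2
  set A : MvPolynomial (Fin n) (Filter.Germ (U : Filter ℕ) (AlgebraicClosure K)) :=
    ∑ m ∈ S, monomial m (Θ fun i => coeff m (a i)) with hAdef
  set B : MvPolynomial (Fin n) (Filter.Germ (U : Filter ℕ) (AlgebraicClosure K)) :=
    ∑ m ∈ S, monomial m (Θ fun i => coeff m (b i)) with hBdef
  have hAco : ∀ m, coeff m A = Θ (fun i => coeff m (a i)) := by
    intro m
    rw [hAdef, coeff_sum]
    simp_rw [coeff_monomial]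
    rw [Finset.sum_ite_eq' S m (fun m' => Θ fun i => coeff m' (a i))]
    split_ifs with hm
    · rfl
    · have : (fun i => coeff m (a i)) = 0 :=
        funext fun i => notMem_support_iff.mp (fun hc => hm (hsuppa i hc))
      rw [this, map_zero]
  have hBco : ∀ m, coeff m B = Θ (fun i => coeff m (b i)) := by
    intro m
    rw [hBdef, coeff_sum]
    simp_rw [coeff_monomial]
    rw [Finset.sum_ite_eq' S m (fun m' => Θ fun i => coeff m' (b i))]
    split_ifs with hm
    · rfl
    · have : (fun i => coeff m (b i)) = 0 :=
        funext fun i => notMem_support_iff.mp (fun hc => hm (hsuppb i hc))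
      rw [this, map_zero]
  -- the factorization over the ultraproduct
  have HM : MvPolynomial.map cM fb - C t * MvPolynomial.map cM gb = A * B := by
    ext m
    rw [coeff_sub, coeff_C_mul, coeff_map cM fb, coeff_map cM gb, coeff_mul]
    calc cM (coeff m fb) - t * cM (coeff m gb)
        = Θ (fun i => coeff m fb - lam i * coeff m gb) := by
          rw [hcMdef, htdef]
          show Θ _ - Θ lam * Θ _ = _
          rw [← map_mul, ← map_sub]
          rfl
      _ = Θ (fun i => ∑ p ∈ Finset.HasAntidiagonal.antidiagonal m, coeff p.1 (a i) * coeff p.2 (b i)) := by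
          congr 1; funext i
          rw [show coeff m fb - lam i * coeff m gb = coeff m (fb - C (lam i) * gb) by
            rw [coeff_sub, coeff_C_mul], hab i, coeff_mul]
      _ = ∑ p ∈ Finset.HasAntidiagonal.antidiagonal m, coeff p.1 A * coeff p.2 B := by
          have hfn : (fun i => ∑ p ∈ Finset.HasAntidiagonal.antidiagonal m,
              coeff p.1 (a i) * coeff p.2 (b i))
              = ∑ p ∈ Finset.HasAntidiagonal.antidiagonal m, (fun i => coeff p.1 (a i) * coeff p.2 (b i)) := by
            funext i; rw [Finset.sum_apply]
          rw [hfn, map_sum]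
          refine Finset.sum_congr rfl fun p _ => ?_
          rw [hAco, hBco, ← map_mul]
          rfl
  -- positivity of degrees over the ultraproduct
  have hposA : 0 < A.totalDegree := by
    have hcover : (Set.univ : Set ℕ) ⊆
        ⋃ m ∈ ((S.filter (fun m => 0 < m.degree) : Finset (Fin n →₀ ℕ)) : Set (Fin n →₀ ℕ)),
          {i | coeff m (a i) ≠ 0} := by
      intro i _
      obtain ⟨m, hmsup, hmdeg⟩ := exists_top_monomial (ha0 i)
      refine Set.mem_biUnion ?_ (mem_support_iff.mp hmsup)
      refine Finset.mem_coe.mpr (Finset.mem_filter.mpr ⟨hsuppa i hmsup, ?_⟩)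
      rw [hmdeg]; exact ha i
    have hUmem : (⋃ m ∈ ((S.filter (fun m => 0 < m.degree) : Finset (Fin n →₀ ℕ)) :
        Set (Fin n →₀ ℕ)), {i | coeff m (a i) ≠ 0}) ∈ U :=
      Filter.mem_of_superset Filter.univ_mem hcover
    obtain ⟨m, hmP, hmU⟩ := (Ultrafilter.finite_biUnion_mem_iff
      (Finset.finite_toSet _)).mp hUmem
    have hzero_not : {i | coeff m (a i) = 0} ∉ U := by
      intro hz
      obtain ⟨i, hi1, hi2⟩ := Filter.nonempty_of_mem (Filter.inter_mem hmU hz)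
      exact hi1 hi2
    have hcne : coeff m A ≠ 0 := by rw [hAco]; exact germ_ne_zero U _ hzero_not
    have hmpos : 0 < m.degree := (Finset.mem_filter.mp (Finset.mem_coe.mp hmP)).2
    calc 0 < m.degree := hmpos
      _ = m.sum fun _ e => e := (degree_sum_eq m).symm
      _ ≤ A.totalDegree := le_totalDegree (mem_support_iff.mpr hcne)
  have hposB : 0 < B.totalDegree := by
    have hcover : (Set.univ : Set ℕ) ⊆
        ⋃ m ∈ ((S.filter (fun m => 0 < m.degree) : Finset (Fin n →₀ ℕ)) : Set (Fin n →₀ ℕ)),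
          {i | coeff m (b i) ≠ 0} := by
      intro i _
      obtain ⟨m, hmsup, hmdeg⟩ := exists_top_monomial (hb0 i)
      refine Set.mem_biUnion ?_ (mem_support_iff.mp hmsup)
      refine Finset.mem_coe.mpr (Finset.mem_filter.mpr ⟨hsuppb i hmsup, ?_⟩)
      rw [hmdeg]; exact hb i
    have hUmem : (⋃ m ∈ ((S.filter (fun m => 0 < m.degree) : Finset (Fin n →₀ ℕ)) :
        Set (Fin n →₀ ℕ)), {i | coeff m (b i) ≠ 0}) ∈ U :=
      Filter.mem_of_superset Filter.univ_mem hcover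
    obtain ⟨m, hmP, hmU⟩ := (Ultrafilter.finite_biUnion_mem_iff
      (Finset.finite_toSet _)).mp hUmem
    have hzero_not : {i | coeff m (b i) = 0} ∉ U := by
      intro hz
      obtain ⟨i, hi1, hi2⟩ := Filter.nonempty_of_mem (Filter.inter_mem hmU hz)
      exact hi1 hi2
    have hcne : coeff m B ≠ 0 := by rw [hBco]; exact germ_ne_zero U _ hzero_not
    have hmpos : 0 < m.degree := (Finset.mem_filter.mp (Finset.mem_coe.mp hmP)).2
    calc 0 < m.degree := hmpos
      _ = m.sum fun _ e => e := (degree_sum_eq m).symm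
      _ ≤ B.totalDegree := le_totalDegree (mem_support_iff.mpr hcne)
  -- embed `RatFunc K` into the ultraproduct, sending `X` to `t`
  set ξ : K →+* (ℕ → AlgebraicClosure K) :=
    (Pi.constRingHom ℕ (AlgebraicClosure K)).comp (algebraMap K (AlgebraicClosure K)) with hξdef
  set φX : Polynomial K →+* Filter.Germ (U : Filter ℕ) (AlgebraicClosure K) :=
    Polynomial.eval₂RingHom (cM.comp (algebraMap K (AlgebraicClosure K))) t with hφXdef
  have hφX : ∀ p : Polynomial K, φX p = Θ (Polynomial.eval₂ ξ lam p) := by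
    intro p
    have h1 := Polynomial.hom_eval₂ (g := Θ) (f := ξ) (x := lam) p
    have h2 : Θ.comp ξ = cM.comp (algebraMap K (AlgebraicClosure K)) :=
      RingHom.ext fun x => rfl
    rw [h2, ← htdef] at h1
    rw [hφXdef, Polynomial.coe_eval₂RingHom]
    exact h1.symm
  have hφXinj : Function.Injective φX := by
    rw [injective_iff_map_eq_zero]
    intro p hp
    by_contra hp0
    have hpm : Polynomial.map (algebraMap K (AlgebraicClosure K)) p ≠ 0 := by
      intro h
      exact hp0 ((Polynomial.map_eq_zero_iff hak).mp h)
    have hroot : {i : ℕ | Polynomial.eval (lam i)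
        (Polynomial.map (algebraMap K (AlgebraicClosure K)) p) = 0}.Finite := by
      have hfin := Polynomial.finite_setOf_isRoot hpm
      exact Set.Finite.preimage (Set.injOn_of_injective hlaminj) hfin
    have heval : ∀ i, Polynomial.eval₂ ξ lam p i
        = Polynomial.eval (lam i) (Polynomial.map (algebraMap K (AlgebraicClosure K)) p) := by
      intro i
      have h1 := Polynomial.hom_eval₂ (g := Pi.evalRingHom (fun _ => AlgebraicClosure K) i)
        (f := ξ) (x := lam) p
      have h2 : (Pi.evalRingHom (fun _ => AlgebraicClosure K) i).comp ξ
          = algebraMap K (AlgebraicClosure K) := RingHom.ext fun x => rfl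
      rw [h2] at h1
      rw [Polynomial.eval_map]
      exact h1
    refine germ_ne_zero U (Polynomial.eval₂ ξ lam p) ?_ ?_
    · intro hmem
      have hset : {i | Polynomial.eval₂ ξ lam p i = 0}
          = {i : ℕ | Polynomial.eval (lam i)
              (Polynomial.map (algebraMap K (AlgebraicClosure K)) p) = 0} := by
        ext i; simp only [Set.mem_setOf_eq, heval i]
      rw [hset] at hmem
      exact hroot.notMem_hyperfilter hmem
    · rw [← hΘdef, ← hφX]
      exact hp
  set ρ : RatFunc K →+* Filter.Germ (U : Filter ℕ) (AlgebraicClosure K) :=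
    IsFractionRing.lift (A := Polynomial K) hφXinj with hρdef
  have hρX : ρ RatFunc.X = t := by
    rw [hρdef, ← RatFunc.algebraMap_X, IsFractionRing.lift_algebraMap, hφXdef]
    exact Polynomial.eval₂_X _ _
  have hρC : ∀ x : K, ρ (algebraMap K (RatFunc K) x)
      = cM (algebraMap K (AlgebraicClosure K) x) := by
    intro x
    have hx : algebraMap K (RatFunc K) x
        = algebraMap (Polynomial K) (RatFunc K) (Polynomial.C x) := by
      rw [RatFunc.algebraMap_C, RatFunc.algebraMap_eq_C]
    rw [hρdef, hx, IsFractionRing.lift_algebraMap, hφXdef]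
    exact Polynomial.eval₂_C _ _
  -- pass to an algebraic closure of the ultraproduct and descend
  set M' := AlgebraicClosure (Filter.Germ (U : Filter ℕ) (AlgebraicClosure K)) with hM'def
  set αM : Filter.Germ (U : Filter ℕ) (AlgebraicClosure K) →+* M' :=
    algebraMap (Filter.Germ (U : Filter ℕ) (AlgebraicClosure K)) M' with hαMdef
  set ρ' : RatFunc K →+* M' := αM.comp ρ with hρ'def
  letI : Algebra (RatFunc K) M' := ρ'.toAlgebra
  set ψ : AlgebraicClosure (RatFunc K) →ₐ[RatFunc K] M' :=
    IsAlgClosed.lift (R := RatFunc K) (M := M') with hψdef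
  have hψρ : ∀ r : RatFunc K, ψ (algebraMap (RatFunc K) (AlgebraicClosure (RatFunc K)) r)
      = ρ' r := fun r => ψ.commutes r
  -- the polynomial from the statement
  set FL : MvPolynomial (Fin n) (AlgebraicClosure (RatFunc K)) :=
    MvPolynomial.map ((algebraMap (RatFunc K) (AlgebraicClosure (RatFunc K))).comp
        (algebraMap K (RatFunc K))) f
      - MvPolynomial.C (algebraMap (RatFunc K) (AlgebraicClosure (RatFunc K)) RatFunc.X) *
        MvPolynomial.map ((algebraMap (RatFunc K) (AlgebraicClosure (RatFunc K))).comp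
          (algebraMap K (RatFunc K))) g with hFLdef
  have hcompf : ψ.toRingHom.comp ((algebraMap (RatFunc K) (AlgebraicClosure (RatFunc K))).comp
      (algebraMap K (RatFunc K))) = (αM.comp cM).comp (algebraMap K (AlgebraicClosure K)) := by
    refine RingHom.ext fun x => ?_
    show ψ (algebraMap (RatFunc K) (AlgebraicClosure (RatFunc K)) (algebraMap K (RatFunc K) x)) = _
    rw [hψρ, hρ'def]
    show αM (ρ (algebraMap K (RatFunc K) x)) = _
    rw [hρC x]
    rfl
  have hABL : MvPolynomial.map ψ.toRingHom FL
      = MvPolynomial.map αM A * MvPolynomial.map αM B := by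
    rw [hFLdef, map_sub, map_mul, MvPolynomial.map_map, MvPolynomial.map_map, MvPolynomial.map_C]
    rw [hcompf]
    have hX : ψ.toRingHom (algebraMap (RatFunc K) (AlgebraicClosure (RatFunc K)) RatFunc.X)
        = αM t := by
      show ψ (algebraMap (RatFunc K) (AlgebraicClosure (RatFunc K)) RatFunc.X) = αM t
      rw [hψρ, hρ'def]
      show αM (ρ RatFunc.X) = αM t
      rw [hρX]
    rw [hX]
    have hmm : ∀ p : MvPolynomial (Fin n) K,
        MvPolynomial.map ((αM.comp cM).comp (algebraMap K (AlgebraicClosure K))) p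
          = MvPolynomial.map αM (MvPolynomial.map cM
              (MvPolynomial.map (algebraMap K (AlgebraicClosure K)) p)) := by
      intro p
      rw [MvPolynomial.map_map, MvPolynomial.map_map]
    rw [hmm f, hmm g]
    rw [← hfbdef, ← hgbdef]
    rw [show (MvPolynomial.C (αM t) : MvPolynomial (Fin n) M')
        = MvPolynomial.map αM (MvPolynomial.C t) from (MvPolynomial.map_C αM t).symm]
    rw [← map_mul, ← map_sub, HM, map_mul]
  have hposA' : 0 < (MvPolynomial.map αM A).totalDegree := by
    rw [totalDegree_map_eq_of_injective αM αM.injective]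
    exact hposA
  have hposB' : 0 < (MvPolynomial.map αM B).totalDegree := by
    rw [totalDegree_map_eq_of_injective αM αM.injective]
    exact hposB
  obtain ⟨p, q, hp, hq, hpq⟩ := descend ψ.toRingHom hABL hposA' hposB'
  exact ⟨p, q, hp, hq, hpq⟩
end

section
/- Let K be a field of characteristic zero and f, g ∈ K[X₁,…,X_n] coprime, not both constant, with d = max(deg f, deg g). If f − T·g is irreducible in Ω[X₁,…,X_n], where Ω is an algebraic closure of K(T), then for all but finitely many λ in the algebraic closure of K, the polynomial f − λg is irreducible of degree d over the algebraic closure of K. -/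
open MvPolynomial

noncomputable section BNAux

/-- bridge -/
lemma bn_sum_eq_degree {σ : Type*} (s : σ →₀ ℕ) : (s.sum fun _ e => e) = s.degree := rfl

lemma bn_degree_add {σ : Type*} (u v : σ →₀ ℕ) : (u + v).degree = u.degree + v.degree := by
  simp [Finsupp.degree_eq_weight_one]

lemma bn_exists_top_monomial {σ R : Type*} [CommSemiring R] {p : MvPolynomial σ R} (hp : p ≠ 0) :
    ∃ m ∈ p.support, m.degree = p.totalDegree := by
  obtain ⟨m, hm, hm2⟩ := p.support.exists_mem_eq_sup
    (MvPolynomial.support_nonempty.mpr hp) (fun s => s.sum fun _ e => e)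
  exact ⟨m, hm, by rw [← bn_sum_eq_degree, ← hm2, totalDegree]⟩

lemma bn_totalDegree_mul_eq {σ R : Type*} [CommRing R] [IsDomain R] {p q : MvPolynomial σ R}
    (hp : p ≠ 0) (hq : q ≠ 0) :
    (p * q).totalDegree = p.totalDegree + q.totalDegree := by
  classical
  set a := p.totalDegree
  set b := q.totalDegree
  set H := homogeneousComponent a p * homogeneousComponent b q with hH
  have hHhom : H.IsHomogeneous (a + b) :=
    (homogeneousComponent_isHomogeneous a p).mul (homogeneousComponent_isHomogeneous b q)
  have hcoeff : ∀ m : σ →₀ ℕ, m.degree = a + b → coeff m (p * q) = coeff m H := by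
    intro m hm
    rw [hH, coeff_mul, coeff_mul]
    apply Finset.sum_congr rfl
    rintro ⟨u, v⟩ huv
    have huv' : u + v = m := Finset.HasAntidiagonal.mem_antidiagonal.mp huv
    have hdsum : u.degree + v.degree = a + b := by rw [← bn_degree_add, huv', hm]
    simp only []
    rcases eq_or_ne u.degree a with hu | hu
    · have hv : v.degree = b := by omega
      rw [coeff_homogeneousComponent, coeff_homogeneousComponent, if_pos hu, if_pos hv]
    · rw [coeff_homogeneousComponent, coeff_homogeneousComponent, if_neg hu]
      rcases lt_or_gt_of_ne hu with hlt | hgt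
      · have hv : b < v.degree := by omega
        have : coeff v q = 0 := by
          by_contra hne
          exact absurd (le_totalDegree (p := q) (mem_support_iff.mpr hne)) (by
            rw [bn_sum_eq_degree]; omega)
        simp [this]
      · have : coeff u p = 0 := by
          by_contra hne
          exact absurd (le_totalDegree (p := p) (mem_support_iff.mpr hne)) (by
            rw [bn_sum_eq_degree]; omega)
        simp [this]
  have hcp : homogeneousComponent a p ≠ 0 := by
    obtain ⟨m, hm, hdeg⟩ := bn_exists_top_monomial hp
    intro h0
    have := coeff_homogeneousComponent (σ := σ) (R := R) a p m
    rw [h0, if_pos hdeg] at this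
    exact (mem_support_iff.mp hm) this.symm
  have hcq : homogeneousComponent b q ≠ 0 := by
    obtain ⟨m, hm, hdeg⟩ := bn_exists_top_monomial hq
    intro h0
    have := coeff_homogeneousComponent (σ := σ) (R := R) b q m
    rw [h0, if_pos hdeg] at this
    exact (mem_support_iff.mp hm) this.symm
  have hH0 : H ≠ 0 := mul_ne_zero hcp hcq
  obtain ⟨m₀, hm₀⟩ := ne_zero_iff.mp hH0
  have hm₀deg : m₀.degree = a + b := by
    by_contra hne
    exact hm₀ (hHhom.coeff_eq_zero hne)
  have hmem : m₀ ∈ (p * q).support := by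
    rw [mem_support_iff, hcoeff m₀ hm₀deg]
    exact hm₀
  refine le_antisymm (totalDegree_mul p q) ?_
  calc a + b = m₀.degree := hm₀deg.symm
    _ = m₀.sum fun _ e => e := (bn_sum_eq_degree m₀).symm
    _ ≤ (p * q).totalDegree := le_totalDegree hmem

lemma bn_isUnit_totalDegree {σ L : Type*} [Field L] {p : MvPolynomial σ L} (h : IsUnit p) :
    p.totalDegree = 0 := by
  obtain ⟨u, rfl⟩ := h
  have h1 : (u : MvPolynomial σ L) * ↑u⁻¹ = 1 := u.mul_inv
  have hu0 : (u : MvPolynomial σ L) ≠ 0 := by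
    intro h0; rw [h0, zero_mul] at h1; exact one_ne_zero h1.symm
  have hv0 : (↑u⁻¹ : MvPolynomial σ L) ≠ 0 := by
    intro h0; rw [h0, mul_zero] at h1; exact one_ne_zero h1.symm
  have := bn_totalDegree_mul_eq hu0 hv0
  rw [h1, totalDegree_one] at this
  omega

lemma bn_one_le_totalDegree {σ L : Type*} [Field L] {p : MvPolynomial σ L}
    (h0 : p ≠ 0) (h : ¬ IsUnit p) : 1 ≤ p.totalDegree := by
  classical
  by_contra hlt
  have htd : p.totalDegree = 0 := by omega
  have : p = C (coeff 0 p) := by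
    ext m
    rcases eq_or_ne m 0 with rfl | hm
    · simp
    · rw [coeff_C, if_neg (Ne.symm hm)]
      by_contra hne
      have h1 := (totalDegree_eq_zero_iff σ p).mp htd m (mem_support_iff.mpr hne)
      exact hm (Finsupp.ext h1)
  have hc : coeff 0 p ≠ 0 := by
    intro hc
    rw [hc, C_0] at this
    exact h0 this
  apply h
  rw [this]
  exact isUnit_iff_exists_inv.mpr ⟨C (coeff 0 p)⁻¹, by
    rw [← C_mul, mul_inv_cancel₀ hc, C_1]⟩

/-! ### Encoding factorizations as polynomial systems -/

/-- Monomials with all exponents bounded by `d`. -/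
def bnMB (n d : ℕ) : Finset (Fin n →₀ ℕ) :=
  Finset.image (fun v : Fin n → Fin (d+1) => Finsupp.equivFunOnFinite.symm fun i => (v i : ℕ))
    Finset.univ

lemma bn_mem_MB {n d : ℕ} {μ : Fin n →₀ ℕ} : μ ∈ bnMB n d ↔ ∀ i, μ i ≤ d := by
  constructor
  · intro h
    obtain ⟨v, -, rfl⟩ := Finset.mem_image.mp h
    intro i
    simpa using Nat.lt_succ_iff.mp (v i).isLt
  · intro h
    refine Finset.mem_image.mpr ⟨fun i => ⟨μ i, Nat.lt_succ_of_le (h i)⟩, Finset.mem_univ _, ?_⟩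
    ext i
    simp

/-- Variable index type: coefficients of the two factors, plus one inverse variable. -/
abbrev bnV (n d : ℕ) : Type := (↥(bnMB n d) ⊕ ↥(bnMB n d)) ⊕ Unit

/-- The variable (or `0`) corresponding to the coefficient of the first factor. -/
def bnxl (R : Type*) [CommSemiring R] (n d : ℕ) (α : Fin n →₀ ℕ) : MvPolynomial (bnV n d) R :=
  if h : α ∈ bnMB n d then X (Sum.inl (Sum.inl ⟨α, h⟩)) else 0

def bnxr (R : Type*) [CommSemiring R] (n d : ℕ) (β : Fin n →₀ ℕ) : MvPolynomial (bnV n d) R :=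
  if h : β ∈ bnMB n d then X (Sum.inl (Sum.inr ⟨β, h⟩)) else 0

lemma bn_map_xl {R S : Type*} [CommSemiring R] [CommSemiring S] (ψ : R →+* S) (n d : ℕ)
    (α : Fin n →₀ ℕ) : MvPolynomial.map ψ (bnxl R n d α) = bnxl S n d α := by
  rw [bnxl, bnxl]; split <;> simp

lemma bn_map_xr {R S : Type*} [CommSemiring R] [CommSemiring S] (ψ : R →+* S) (n d : ℕ)
    (β : Fin n →₀ ℕ) : MvPolynomial.map ψ (bnxr R n d β) = bnxr S n d β := by
  rw [bnxr, bnxr]; split <;> simp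

/-- first factor associated to a point -/
def bnP (L : Type*) [CommSemiring L] {n d : ℕ} (y : bnV n d → L) : MvPolynomial (Fin n) L :=
  ∑ α ∈ (bnMB n d).attach, monomial (↑α) (y (Sum.inl (Sum.inl α)))

def bnQ (L : Type*) [CommSemiring L] {n d : ℕ} (y : bnV n d → L) : MvPolynomial (Fin n) L :=
  ∑ β ∈ (bnMB n d).attach, monomial (↑β) (y (Sum.inl (Sum.inr β)))

lemma bn_coeff_P {L : Type*} [CommSemiring L] {n d : ℕ} (y : bnV n d → L) (α : Fin n →₀ ℕ) :
    coeff α (bnP L y) = if h : α ∈ bnMB n d then y (Sum.inl (Sum.inl ⟨α, h⟩)) else 0 := by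
  classical
  rw [bnP, coeff_sum]
  split
  · rename_i h
    rw [Finset.sum_eq_single (⟨α, h⟩ : ↥(bnMB n d))]
    · rw [coeff_monomial, if_pos rfl]
    · intro b _ hb
      rw [coeff_monomial, if_neg]
      intro hba; exact hb (Subtype.ext hba)
    · intro hmem; exact absurd (Finset.mem_attach _ _) hmem
  · rename_i h
    apply Finset.sum_eq_zero
    intro b _
    rw [coeff_monomial, if_neg]
    intro hba; exact h (hba ▸ b.2)

lemma bn_coeff_Q {L : Type*} [CommSemiring L] {n d : ℕ} (y : bnV n d → L) (β : Fin n →₀ ℕ) :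
    coeff β (bnQ L y) = if h : β ∈ bnMB n d then y (Sum.inl (Sum.inr ⟨β, h⟩)) else 0 := by
  classical
  rw [bnQ, coeff_sum]
  split
  · rename_i h
    rw [Finset.sum_eq_single (⟨β, h⟩ : ↥(bnMB n d))]
    · rw [coeff_monomial, if_pos rfl]
    · intro b _ hb
      rw [coeff_monomial, if_neg]
      intro hba; exact hb (Subtype.ext hba)
    · intro hmem; exact absurd (Finset.mem_attach _ _) hmem
  · rename_i h
    apply Finset.sum_eq_zero
    intro b _
    rw [coeff_monomial, if_neg]
    intro hba; exact h (hba ▸ b.2)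

lemma bn_eval_xl {L : Type*} [CommSemiring L] {n d : ℕ} (y : bnV n d → L) (α : Fin n →₀ ℕ) :
    eval y (bnxl L n d α) = coeff α (bnP L y) := by
  rw [bnxl, bn_coeff_P]; split <;> simp

lemma bn_eval_xr {L : Type*} [CommSemiring L] {n d : ℕ} (y : bnV n d → L) (β : Fin n →₀ ℕ) :
    eval y (bnxr L n d β) = coeff β (bnQ L y) := by
  rw [bnxr, bn_coeff_Q]; split <;> simp

variable {K : Type*} [Field K]

/-- The equation expressing that the coefficient of `μ` in the product of the two factors
equals the coefficient of `μ` in `f - T⬝g`. -/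
def bnEqn {n : ℕ} (f g : MvPolynomial (Fin n) K) (d : ℕ) (μ : Fin n →₀ ℕ) :
    MvPolynomial (bnV n d) (Polynomial K) :=
  (∑ ab ∈ Finset.HasAntidiagonal.antidiagonal μ, bnxl (Polynomial K) n d ab.1 * bnxr (Polynomial K) n d ab.2)
    - C (Polynomial.C (coeff μ f) - Polynomial.C (coeff μ g) * Polynomial.X)

/-- The full system. -/
def bnSys {n : ℕ} (f g : MvPolynomial (Fin n) K) (d : ℕ) (m₁ m₂ : Fin n →₀ ℕ) :
    Set (MvPolynomial (bnV n d) (Polynomial K)) :=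
  (fun μ => bnEqn f g d μ) '' ↑(bnMB n (2*d))
    ∪ {bnxl (Polynomial K) n d m₁ - 1, bnxr (Polynomial K) n d m₂ * X (Sum.inr ()) - 1}

lemma bn_eval_eqn {n : ℕ} {f g : MvPolynomial (Fin n) K} {d : ℕ} {L : Type*} [Field L]
    (ψ : Polynomial K →+* L) (y : bnV n d → L) (μ : Fin n →₀ ℕ) :
    eval y (MvPolynomial.map ψ (bnEqn f g d μ))
      = coeff μ (bnP L y * bnQ L y)
        - coeff μ (MvPolynomial.map (ψ.comp Polynomial.C) f
            - C (ψ Polynomial.X) * MvPolynomial.map (ψ.comp Polynomial.C) g) := by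
  classical
  rw [bnEqn]
  rw [map_sub, map_sum]
  rw [map_sub, map_sum]
  congr 1
  · rw [coeff_mul]
    apply Finset.sum_congr rfl
    intro ab _
    rw [map_mul, map_mul, bn_map_xl, bn_map_xr, bn_eval_xl, bn_eval_xr]
  · rw [MvPolynomial.map_C, eval_C, coeff_sub, coeff_map, coeff_C_mul, coeff_map]
    rw [map_sub, map_mul]
    simp only [RingHom.comp_apply]
    ring

lemma bn_sol_iff {n : ℕ} {f g : MvPolynomial (Fin n) K} {d : ℕ} {m₁ m₂ : Fin n →₀ ℕ}
    (hfd : f.totalDegree ≤ d) (hgd : g.totalDegree ≤ d)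
    {L : Type*} [Field L] (ψ : Polynomial K →+* L) (y : bnV n d → L) :
    (∀ e ∈ bnSys f g d m₁ m₂, eval y (MvPolynomial.map ψ e) = 0) ↔
      (bnP L y * bnQ L y = MvPolynomial.map (ψ.comp Polynomial.C) f
          - C (ψ Polynomial.X) * MvPolynomial.map (ψ.comp Polynomial.C) g
        ∧ coeff m₁ (bnP L y) = 1 ∧ coeff m₂ (bnQ L y) * y (Sum.inr ()) = 1) := by
  classical
  set F : MvPolynomial (Fin n) L := MvPolynomial.map (ψ.comp Polynomial.C) f
    - C (ψ Polynomial.X) * MvPolynomial.map (ψ.comp Polynomial.C) g with hF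
  have hEl : eval y (MvPolynomial.map ψ (bnxl (Polynomial K) n d m₁ - 1))
      = coeff m₁ (bnP L y) - 1 := by
    rw [map_sub, map_one, map_sub, map_one, bn_map_xl, bn_eval_xl]
  have hEr : eval y (MvPolynomial.map ψ (bnxr (Polynomial K) n d m₂ * X (Sum.inr ()) - 1))
      = coeff m₂ (bnQ L y) * y (Sum.inr ()) - 1 := by
    rw [map_sub, map_one, map_mul, MvPolynomial.map_X, map_sub, map_one, map_mul,
      bn_map_xr, bn_eval_xr, eval_X]
  constructor
  · intro h
    have h1 : bnP L y * bnQ L y = F := by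
      ext μ
      by_cases hμ : μ ∈ bnMB n (2*d)
      · have := h (bnEqn f g d μ) (Or.inl ⟨μ, hμ, rfl⟩)
        rw [bn_eval_eqn] at this
        exact sub_eq_zero.mp this
      · have hPQ : coeff μ (bnP L y * bnQ L y) = 0 := by
          rw [coeff_mul]
          apply Finset.sum_eq_zero
          rintro ⟨u, v⟩ huv
          have huv' : u + v = μ := Finset.HasAntidiagonal.mem_antidiagonal.mp huv
          by_contra hne
          have hu : coeff u (bnP L y) ≠ 0 := fun h0 => hne (by simp [h0])
          have hv : coeff v (bnQ L y) ≠ 0 := fun h0 => hne (by simp [h0])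
          have huM : u ∈ bnMB n d := by
            by_contra hc; rw [bn_coeff_P, dif_neg hc] at hu; exact hu rfl
          have hvM : v ∈ bnMB n d := by
            by_contra hc; rw [bn_coeff_Q, dif_neg hc] at hv; exact hv rfl
          apply hμ
          rw [bn_mem_MB]
          intro i
          have h1 := bn_mem_MB.mp huM i
          have h2 := bn_mem_MB.mp hvM i
          have := congrFun (congrArg (fun w : Fin n →₀ ℕ => (w : Fin n → ℕ)) huv') i
          simp only [Finsupp.coe_add, Pi.add_apply] at this
          omega
        have hcf : coeff μ f = 0 := by
          by_contra hc
          apply hμ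
          rw [bn_mem_MB]
          intro i
          have h1 : μ.degree ≤ f.totalDegree := by
            rw [← bn_sum_eq_degree]
            exact le_totalDegree (mem_support_iff.mpr hc)
          have h2 := Finsupp.le_degree i μ
          omega
        have hcg : coeff μ g = 0 := by
          by_contra hc
          apply hμ
          rw [bn_mem_MB]
          intro i
          have h1 : μ.degree ≤ g.totalDegree := by
            rw [← bn_sum_eq_degree]
            exact le_totalDegree (mem_support_iff.mpr hc)
          have h2 := Finsupp.le_degree i μ
          omega
        rw [hPQ, hF, coeff_sub, coeff_map, coeff_C_mul, coeff_map, hcf, hcg]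
        simp
    refine ⟨h1, ?_, ?_⟩
    · have := h _ (Or.inr (Or.inl rfl))
      rw [hEl] at this
      exact sub_eq_zero.mp this
    · have := h _ (Or.inr (Or.inr rfl))
      rw [hEr] at this
      exact sub_eq_zero.mp this
  · rintro ⟨h1, h2, h3⟩ e he
    rcases he with ⟨μ, -, rfl⟩ | he
    · rw [bn_eval_eqn, h1, sub_self]
    · rcases he with rfl | rfl
      · rw [hEl, h2, sub_self]
      · rw [hEr, h3, sub_self]

lemma bn_decode {n d : ℕ} {m₁ m₂ : Fin n →₀ ℕ} (hm₁ : m₁.degree ≠ 0) (hm₂ : m₂.degree ≠ 0)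
    {L : Type*} [Field L] {F : MvPolynomial (Fin n) L} {y : bnV n d → L}
    (h1 : bnP L y * bnQ L y = F) (h2 : coeff m₁ (bnP L y) = 1)
    (h3 : coeff m₂ (bnQ L y) * y (Sum.inr ()) = 1) :
    ¬ Irreducible F := by
  intro hIrr
  have hpu : ¬ IsUnit (bnP L y) := by
    intro hu
    have htd := bn_isUnit_totalDegree hu
    have : m₁.degree ≤ (bnP L y).totalDegree := by
      rw [← bn_sum_eq_degree]
      exact le_totalDegree (mem_support_iff.mpr (by rw [h2]; exact one_ne_zero))
    omega
  have hqu : ¬ IsUnit (bnQ L y) := by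
    intro hu
    have htd := bn_isUnit_totalDegree hu
    have hc : coeff m₂ (bnQ L y) ≠ 0 := by
      intro h0; rw [h0, zero_mul] at h3; exact one_ne_zero h3.symm
    have : m₂.degree ≤ (bnQ L y).totalDegree := by
      rw [← bn_sum_eq_degree]
      exact le_totalDegree (mem_support_iff.mpr hc)
    omega
  rcases hIrr.isUnit_or_isUnit h1.symm with h | h
  · exact hpu h
  · exact hqu h

lemma bn_encode {n : ℕ} {d : ℕ} (hd1 : 1 ≤ d)
    {L : Type*} [Field L] {F : MvPolynomial (Fin n) L}
    (hdeg : F.totalDegree = d) (hnotirr : ¬ Irreducible F) :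
    ∃ m₁ m₂ : Fin n →₀ ℕ, m₁ ∈ bnMB n d ∧ m₂ ∈ bnMB n d ∧ m₁.degree ≠ 0 ∧ m₂.degree ≠ 0 ∧
      ∃ y : bnV n d → L, bnP L y * bnQ L y = F ∧ coeff m₁ (bnP L y) = 1 ∧
        coeff m₂ (bnQ L y) * y (Sum.inr ()) = 1 := by
  classical
  have hF0 : F ≠ 0 := by
    intro h; rw [h, totalDegree_zero] at hdeg; omega
  have hFu : ¬ IsUnit F := by
    intro h; have := bn_isUnit_totalDegree h; omega
  obtain ⟨p, q, hpq, hpu, hqu⟩ : ∃ p q, F = p * q ∧ ¬IsUnit p ∧ ¬IsUnit q := by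
    rw [irreducible_iff] at hnotirr
    push_neg at hnotirr
    exact hnotirr hFu
  have hp0 : p ≠ 0 := by rintro rfl; rw [zero_mul] at hpq; exact hF0 hpq
  have hq0 : q ≠ 0 := by rintro rfl; rw [mul_zero] at hpq; exact hF0 hpq
  have hsum : p.totalDegree + q.totalDegree = d := by
    rw [← hdeg, hpq, bn_totalDegree_mul_eq hp0 hq0]
  have hp1 : 1 ≤ p.totalDegree := bn_one_le_totalDegree hp0 hpu
  have hq1 : 1 ≤ q.totalDegree := bn_one_le_totalDegree hq0 hqu
  obtain ⟨m₁, hm₁s, hm₁deg⟩ := bn_exists_top_monomial hp0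
  obtain ⟨m₂, hm₂s, hm₂deg⟩ := bn_exists_top_monomial hq0
  set c : L := coeff m₁ p with hc
  have hc0 : c ≠ 0 := mem_support_iff.mp hm₁s
  set p' := C c⁻¹ * p with hp'
  set q' := C c * q with hq'
  have hsupp_p' : ∀ μ : Fin n →₀ ℕ, coeff μ p' ≠ 0 → μ ∈ bnMB n d := by
    intro μ hμ
    rw [hp', coeff_C_mul] at hμ
    have hμp : coeff μ p ≠ 0 := by intro h0; rw [h0, mul_zero] at hμ; exact hμ rfl
    rw [bn_mem_MB]
    intro i
    have h1 : μ.degree ≤ p.totalDegree := by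
      rw [← bn_sum_eq_degree]; exact le_totalDegree (mem_support_iff.mpr hμp)
    have h2 := Finsupp.le_degree i μ
    omega
  have hsupp_q' : ∀ μ : Fin n →₀ ℕ, coeff μ q' ≠ 0 → μ ∈ bnMB n d := by
    intro μ hμ
    rw [hq', coeff_C_mul] at hμ
    have hμq : coeff μ q ≠ 0 := by intro h0; rw [h0, mul_zero] at hμ; exact hμ rfl
    rw [bn_mem_MB]
    intro i
    have h1 : μ.degree ≤ q.totalDegree := by
      rw [← bn_sum_eq_degree]; exact le_totalDegree (mem_support_iff.mpr hμq)
    have h2 := Finsupp.le_degree i μ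
    omega
  have hm₂q' : coeff m₂ q' ≠ 0 := by
    rw [hq', coeff_C_mul]
    exact mul_ne_zero hc0 (mem_support_iff.mp hm₂s)
  set y : bnV n d → L := fun v =>
    match v with
    | Sum.inl (Sum.inl α) => coeff (↑α) p'
    | Sum.inl (Sum.inr β) => coeff (↑β) q'
    | Sum.inr () => (coeff m₂ q')⁻¹ with hy
  have hPy : bnP L y = p' := by
    ext μ
    rw [bn_coeff_P]
    split
    · rfl
    · rename_i hns
      by_contra hne
      exact hns (hsupp_p' μ fun h0 => hne h0.symm)
  have hQy : bnQ L y = q' := by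
    ext μ
    rw [bn_coeff_Q]
    split
    · rfl
    · rename_i hns
      by_contra hne
      exact hns (hsupp_q' μ fun h0 => hne h0.symm)
  refine ⟨m₁, m₂, ?_, ?_, ?_, ?_, y, ?_, ?_, ?_⟩
  · rw [bn_mem_MB]
    intro i
    have h2 := Finsupp.le_degree i m₁
    omega
  · rw [bn_mem_MB]
    intro i
    have h2 := Finsupp.le_degree i m₂
    omega
  · omega
  · omega
  · rw [hPy, hQy, hp', hq', hpq]
    rw [show C c⁻¹ * p * (C c * q) = (C c⁻¹ * C c) * (p * q) by ring,
      ← C_mul, inv_mul_cancel₀ hc0, C_1, one_mul]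
  · rw [hPy, hp', coeff_C_mul, ← hc, inv_mul_cancel₀ hc0]
  · rw [hQy]
    exact mul_inv_cancel₀ hm₂q'

/-! ### Transfer machinery -/

lemma bn_nullst {k : Type*} [Field k] [IsAlgClosed k] {σ : Type*} [Finite σ]
    (S : Set (MvPolynomial σ k)) (h : ¬ ∃ y : σ → k, ∀ e ∈ S, eval y e = 0) :
    (1 : MvPolynomial σ k) ∈ Ideal.span S := by
  rcases Set.eq_empty_or_nonempty (zeroLocus k (Ideal.span S)) with hemp | ⟨x, hx⟩
  · have hrad : (Ideal.span S).radical = ⊤ := by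
      rw [← vanishingIdeal_zeroLocus_eq_radical (K := k), hemp, vanishingIdeal_empty]
    have h1 : (1 : MvPolynomial σ k) ∈ (Ideal.span S).radical := hrad ▸ Submodule.mem_top
    obtain ⟨m, hm⟩ := h1
    rwa [one_pow] at hm
  · exact absurd ⟨x, fun e he => (mem_zeroLocus_iff.mp hx) e (Ideal.subset_span he)⟩ h

lemma bn_descend {F E : Type*} [Field F] [Field E] [Algebra F E] {σ : Type*}
    (S : Set (MvPolynomial σ F))
    (h : (1 : MvPolynomial σ E) ∈ Ideal.span (MvPolynomial.map (algebraMap F E) '' S)) :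
    (1 : MvPolynomial σ F) ∈ Ideal.span S := by
  classical
  -- a linear retraction of the field extension
  obtain ⟨π, hπ⟩ := LinearMap.exists_leftInverse_of_injective (Algebra.linearMap F E)
    (LinearMap.ker_eq_bot.mpr (algebraMap F E).injective)
  have hπ1 : π 1 = 1 := by
    have := congrArg (fun (φ : F →ₗ[F] F) => φ 1) hπ
    simpa using this
  have hπ0 : π 0 = 0 := map_zero π
  rw [← Ideal.submodule_span_eq, Submodule.mem_span_set] at h
  obtain ⟨c, hsupp, hsum⟩ := h
  choose! sfun hsfunS hsfunmap using fun i (hi : i ∈ c.support) =>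
    (Set.mem_image _ _ _).mp (hsupp hi)
  -- the coefficientwise retraction
  set Pi' : MvPolynomial σ E → MvPolynomial σ F := fun h =>
    ∑ μ ∈ h.support, monomial μ (π (coeff μ h)) with hPi'
  have hcoeffPi : ∀ (h : MvPolynomial σ E) (μ : σ →₀ ℕ), coeff μ (Pi' h) = π (coeff μ h) := by
    intro h μ
    rw [hPi']
    simp only [coeff_sum, coeff_monomial]
    rw [Finset.sum_ite_eq' h.support μ (fun ν => π (coeff ν h))]
    split
    · rfl
    · rename_i hns
      rw [notMem_support_iff.mp hns, hπ0]
  have key : (1 : MvPolynomial σ F) = ∑ i ∈ c.support, Pi' (c i) * sfun i := by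
    ext μ
    have hRHS : coeff μ (∑ i ∈ c.support, Pi' (c i) * sfun i)
        = π (coeff μ (∑ i ∈ c.support, c i * MvPolynomial.map (algebraMap F E) (sfun i))) := by
      rw [coeff_sum, coeff_sum, map_sum]
      apply Finset.sum_congr rfl
      intro i hi
      rw [coeff_mul, coeff_mul, map_sum]
      apply Finset.sum_congr rfl
      intro ab _
      rw [hcoeffPi, coeff_map]
      calc π (coeff ab.1 (c i)) * coeff ab.2 (sfun i)
          = coeff ab.2 (sfun i) • π (coeff ab.1 (c i)) := by rw [smul_eq_mul, mul_comm]
        _ = π (coeff ab.2 (sfun i) • coeff ab.1 (c i)) := (map_smul π _ _).symm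
        _ = π (coeff ab.1 (c i) * algebraMap F E (coeff ab.2 (sfun i))) := by
            rw [Algebra.smul_def, mul_comm]
    rw [hRHS]
    have hone : (∑ i ∈ c.support, c i * MvPolynomial.map (algebraMap F E) (sfun i))
        = (1 : MvPolynomial σ E) := by
      rw [← hsum, Finsupp.sum]
      apply Finset.sum_congr rfl
      intro i hi
      rw [smul_eq_mul, hsfunmap i hi]
    rw [hone, coeff_one, coeff_one]
    split
    · exact hπ1.symm
    · exact hπ0.symm
  rw [key]
  apply Ideal.sum_mem
  intro i hi
  exact Ideal.mul_mem_left _ _ (Ideal.subset_span (hsfunS i hi))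

lemma bn_clear_denoms {R Q : Type*} [CommRing R] [IsDomain R] [Field Q] [Algebra R Q]
    [IsFractionRing R Q] {σ : Type*} (S : Set (MvPolynomial σ R))
    (h : (1 : MvPolynomial σ Q) ∈ Ideal.span (MvPolynomial.map (algebraMap R Q) '' S)) :
    ∃ b : R, b ≠ 0 ∧ (C b : MvPolynomial σ R) ∈ Ideal.span S := by
  classical
  rw [← Ideal.submodule_span_eq, Submodule.mem_span_set] at h
  obtain ⟨c, hsupp, hsum⟩ := h
  choose! sfun hsfunS hsfunmap using fun i (hi : i ∈ c.support) =>
    (Set.mem_image _ _ _).mp (hsupp hi)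
  -- clear denominators of all the coefficients appearing in the combination
  set coefs : Finset Q := c.support.biUnion
    (fun i => (c i).support.image (fun μ => coeff μ (c i))) with hcoefs
  obtain ⟨b, hb⟩ := IsLocalization.exist_integer_multiples (nonZeroDivisors R) coefs id
  choose! rfun hrfun using fun q (hq : q ∈ coefs) => hb q hq
  have hmemcoefs : ∀ i ∈ c.support, ∀ μ ∈ (c i).support, coeff μ (c i) ∈ coefs := by
    intro i hi μ hμ
    rw [hcoefs]
    exact Finset.mem_biUnion.mpr ⟨i, hi, Finset.mem_image.mpr ⟨μ, hμ, rfl⟩⟩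
  -- integral versions of the coefficient polynomials
  set D : MvPolynomial σ Q → MvPolynomial σ R := fun h =>
    ∑ μ ∈ h.support, monomial μ (rfun (coeff μ h)) with hD
  have hmapD : ∀ i ∈ c.support,
      MvPolynomial.map (algebraMap R Q) (D (c i)) = C (algebraMap R Q (b : R)) * c i := by
    intro i hi
    ext μ
    rw [coeff_map, coeff_C_mul]
    have hcoeffD : coeff μ (D (c i)) = if μ ∈ (c i).support then rfun (coeff μ (c i)) else 0 := by
      rw [hD]
      simp only [coeff_sum, coeff_monomial]
      rw [Finset.sum_ite_eq' (c i).support μ (fun ν => rfun (coeff ν (c i)))]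
    rw [hcoeffD]
    split
    · rename_i hin
      have := hrfun (coeff μ (c i)) (hmemcoefs i hi μ hin)
      rw [this]
      rw [id_eq, Algebra.smul_def]
    · rename_i hnin
      rw [notMem_support_iff.mp hnin, mul_zero, map_zero]
  have key : MvPolynomial.map (algebraMap R Q) (C (b : R))
      = MvPolynomial.map (algebraMap R Q) (∑ i ∈ c.support, D (c i) * sfun i) := by
    rw [map_sum, MvPolynomial.map_C]
    calc C (algebraMap R Q (b : R))
        = C (algebraMap R Q (b : R)) * 1 := (mul_one _).symm
      _ = C (algebraMap R Q (b : R)) * ∑ i ∈ c.support, c i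
            * MvPolynomial.map (algebraMap R Q) (sfun i) := by
          congr 1
          rw [← hsum, Finsupp.sum]
          apply Finset.sum_congr rfl
          intro i hi
          rw [smul_eq_mul, hsfunmap i hi]
      _ = ∑ i ∈ c.support, (C (algebraMap R Q (b : R)) * c i)
            * MvPolynomial.map (algebraMap R Q) (sfun i) := by
          rw [Finset.mul_sum]
          apply Finset.sum_congr rfl
          intro i hi
          ring
      _ = ∑ i ∈ c.support, MvPolynomial.map (algebraMap R Q) (D (c i) * sfun i) := by
          apply Finset.sum_congr rfl
          intro i hi
          rw [map_mul, hmapD i hi]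
  have hinj : Function.Injective
      (MvPolynomial.map (σ := σ) (algebraMap R Q)) :=
    MvPolynomial.map_injective _ (IsFractionRing.injective R Q)
  have keyR : (C (b : R) : MvPolynomial σ R) = ∑ i ∈ c.support, D (c i) * sfun i := hinj key
  refine ⟨b, nonZeroDivisors.ne_zero b.2, ?_⟩
  rw [keyR]
  apply Ideal.sum_mem
  intro i hi
  exact Ideal.mul_mem_left _ _ (Ideal.subset_span (hsfunS i hi))

lemma bn_transfer {V : Type*} [Finite V] (S : Set (MvPolynomial V (Polynomial K)))
    (hΩ : ¬ ∃ y : V → AlgebraicClosure (RatFunc K), ∀ e ∈ S,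
      eval y (MvPolynomial.map ((algebraMap (RatFunc K) (AlgebraicClosure (RatFunc K))).comp
        (algebraMap (Polynomial K) (RatFunc K))) e) = 0) :
    {lam : AlgebraicClosure K | ∃ y : V → AlgebraicClosure K, ∀ e ∈ S,
      eval y (MvPolynomial.map
        (Polynomial.eval₂RingHom (algebraMap K (AlgebraicClosure K)) lam) e) = 0}.Finite := by
  classical
  set Ω := AlgebraicClosure (RatFunc K)
  set A := AlgebraicClosure K
  -- no common zero over Ω, so 1 is in the span of the mapped system
  have h1 : (1 : MvPolynomial V Ω) ∈ Ideal.span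
      (MvPolynomial.map ((algebraMap (RatFunc K) Ω).comp
        (algebraMap (Polynomial K) (RatFunc K))) '' S) := by
    apply bn_nullst
    intro ⟨y, hy⟩
    apply hΩ
    refine ⟨y, fun e he => hy _ (Set.mem_image_of_mem _ he)⟩
  -- rewrite the image through the two maps
  have himg : MvPolynomial.map ((algebraMap (RatFunc K) Ω).comp
        (algebraMap (Polynomial K) (RatFunc K))) '' S
      = MvPolynomial.map (algebraMap (RatFunc K) Ω) ''
          (MvPolynomial.map (algebraMap (Polynomial K) (RatFunc K)) '' S) := by
    rw [Set.image_image]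
    apply Set.image_congr
    intro e _
    rw [MvPolynomial.map_map]
  rw [himg] at h1
  have h2 := bn_descend _ h1
  obtain ⟨b, hb0, hbmem⟩ := bn_clear_denoms S h2
  -- now conclude finiteness
  have hmapb : Polynomial.map (algebraMap K A) b ≠ 0 :=
    Polynomial.map_ne_zero_iff (algebraMap K A).injective |>.mpr hb0
  apply Set.Finite.subset (Polynomial.finite_setOf_isRoot hmapb)
  rintro lam ⟨y, hy⟩
  set Φ : MvPolynomial V (Polynomial K) →+* A :=
    (eval y).comp (MvPolynomial.map (Polynomial.eval₂RingHom (algebraMap K A) lam)) with hΦ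
  have hker : Ideal.span S ≤ RingHom.ker Φ := by
    rw [Ideal.span_le]
    intro e he
    exact RingHom.mem_ker.mpr (hy e he)
  have hΦb : Φ (C b) = 0 := hker hbmem
  rw [hΦ] at hΦb
  simp only [RingHom.comp_apply, MvPolynomial.map_C, eval_C, Polynomial.coe_eval₂RingHom] at hΦb
  show Polynomial.IsRoot _ lam
  rwa [Polynomial.IsRoot, Polynomial.eval_map]

/-! ### degree lemmas -/

lemma bn_totalDegree_map_eq {σ R S : Type*} [CommSemiring R] [CommSemiring S] {φ : R →+* S}
    (hφ : Function.Injective φ) (p : MvPolynomial σ R) :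
    (MvPolynomial.map φ p).totalDegree = p.totalDegree := by
  rw [totalDegree, totalDegree, MvPolynomial.support_map_of_injective _ hφ]

lemma bn_totalDegree_C_mul {σ L : Type*} [Field L] (c : L) (hc : c ≠ 0)
    (h : MvPolynomial σ L) : (C c * h).totalDegree = h.totalDegree := by
  refine le_antisymm ((totalDegree_mul _ _).trans (by rw [totalDegree_C]; omega)) ?_
  conv_lhs => rw [show h = C c⁻¹ * (C c * h) by
    rw [← mul_assoc, ← C_mul, inv_mul_cancel₀ hc, C_1, one_mul]]
  exact (totalDegree_mul _ _).trans (by rw [totalDegree_C]; omega)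

lemma bn_pencil_deg_le {n : ℕ} (f g : MvPolynomial (Fin n) K) {L : Type*} [Field L]
    (φ : K →+* L) (t : L) {d : ℕ} (hfd : f.totalDegree ≤ d) (hgd : g.totalDegree ≤ d) :
    (MvPolynomial.map φ f - C t * MvPolynomial.map φ g).totalDegree ≤ d := by
  have h1 : (MvPolynomial.map φ f).totalDegree ≤ d := by
    rw [bn_totalDegree_map_eq φ.injective]; exact hfd
  have h2 : (C t * MvPolynomial.map φ g).totalDegree ≤ d := by
    refine (totalDegree_mul _ _).trans ?_
    rw [totalDegree_C, bn_totalDegree_map_eq φ.injective]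
    omega
  calc (MvPolynomial.map φ f - C t * MvPolynomial.map φ g).totalDegree
      = (MvPolynomial.map φ f + (-(C t * MvPolynomial.map φ g))).totalDegree := by
        rw [sub_eq_add_neg]
    _ ≤ max _ _ := totalDegree_add _ _
    _ ≤ d := by
        rw [totalDegree_neg]
        omega

lemma bn_td_sub {σ R : Type*} [CommRing R] (x y : MvPolynomial σ R) :
    (x - y).totalDegree ≤ max x.totalDegree y.totalDegree := by
  rw [sub_eq_add_neg]
  refine (totalDegree_add _ _).trans ?_
  rw [totalDegree_neg]

lemma bn_degbad_subsingleton {n : ℕ} (f g : MvPolynomial (Fin n) K) {d : ℕ}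
    (hd : d = max f.totalDegree g.totalDegree) :
    Set.Subsingleton {lam : AlgebraicClosure K |
      (MvPolynomial.map (algebraMap K (AlgebraicClosure K)) f
        - C lam * MvPolynomial.map (algebraMap K (AlgebraicClosure K)) g).totalDegree ≠ d} := by
  have hfd : f.totalDegree ≤ d := by omega
  have hgd : g.totalDegree ≤ d := by omega
  set A := AlgebraicClosure K
  set φ := algebraMap K A with hφ
  set mf := MvPolynomial.map φ f with hmf
  set mg := MvPolynomial.map φ g with hmg
  intro l1 h1 l2 h2
  by_contra hne
  have hlt : ∀ l : A, (mf - C l * mg).totalDegree ≠ d → (mf - C l * mg).totalDegree < d :=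
    fun l h => lt_of_le_of_ne (bn_pencil_deg_le f g φ l hfd hgd) h
  have h1' := hlt l1 h1
  have h2' := hlt l2 h2
  have hdiff : (mf - C l1 * mg) - (mf - C l2 * mg) = C (l2 - l1) * mg := by
    rw [map_sub]
    ring
  have hsub : ((mf - C l1 * mg) - (mf - C l2 * mg)).totalDegree < d :=
    lt_of_le_of_lt (bn_td_sub _ _) (by omega)
  rw [hdiff, bn_totalDegree_C_mul _ (sub_ne_zero.mpr (Ne.symm hne))] at hsub
  -- so mg has total degree < d
  have hmf' : mf.totalDegree < d := by
    have hCl : (C l1 * mg).totalDegree < d := by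
      refine lt_of_le_of_lt ((totalDegree_mul _ _).trans ?_) (show mg.totalDegree < d from hsub)
      rw [totalDegree_C]
      omega
    have : mf = (mf - C l1 * mg) + C l1 * mg := by ring
    rw [this]
    exact lt_of_le_of_lt (totalDegree_add _ _) (by omega)
  have hf' : f.totalDegree < d := by
    rw [← bn_totalDegree_map_eq (φ.injective) f]
    exact hmf'
  have hg' : g.totalDegree < d := by
    rw [← bn_totalDegree_map_eq (φ.injective) g]
    exact hsub
  omega

end BNAux

/-- In characteristic zero, if `f - T·g` is irreducible over the algebraic closure `Ω`
of `K(T)`, then for all but finitely many `λ` in the algebraic closure of `K` the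
polynomial `f - λ·g` is irreducible of degree `d = max(deg f, deg g)`. -/
theorem stmt_10 {K : Type*} [Field K] [CharZero K] {n : ℕ}
    (f g : MvPolynomial (Fin n) K) (hfg : IsRelPrime f g)
    (hnc : ¬ (f.totalDegree = 0 ∧ g.totalDegree = 0))
    (d : ℕ) (hd : d = max f.totalDegree g.totalDegree)
    (hirr : Irreducible
      (MvPolynomial.map ((algebraMap (RatFunc K) (AlgebraicClosure (RatFunc K))).comp
          (algebraMap K (RatFunc K))) f
        - MvPolynomial.C (algebraMap (RatFunc K) (AlgebraicClosure (RatFunc K)) RatFunc.X) *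
          MvPolynomial.map ((algebraMap (RatFunc K) (AlgebraicClosure (RatFunc K))).comp
            (algebraMap K (RatFunc K))) g)) :
    Set.Finite {lam : AlgebraicClosure K |
      ¬ ((MvPolynomial.map (algebraMap K (AlgebraicClosure K)) f
            - MvPolynomial.C lam * MvPolynomial.map (algebraMap K (AlgebraicClosure K)) g
            ).totalDegree = d ∧
          Irreducible (MvPolynomial.map (algebraMap K (AlgebraicClosure K)) f
            - MvPolynomial.C lam *
              MvPolynomial.map (algebraMap K (AlgebraicClosure K)) g))} := by
  classical
  open MvPolynomial in
  set A := AlgebraicClosure K with hA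
  set Ω := AlgebraicClosure (RatFunc K) with hΩdef
  have hfd : f.totalDegree ≤ d := by rw [hd]; exact le_max_left _ _
  have hgd : g.totalDegree ≤ d := by rw [hd]; exact le_max_right _ _
  have hd1 : 1 ≤ d := by
    rcases Nat.eq_zero_or_pos d with h0 | h
    · exact absurd ⟨by omega, by omega⟩ hnc
    · omega
  set ψΩ : Polynomial K →+* Ω :=
    (algebraMap (RatFunc K) Ω).comp (algebraMap (Polynomial K) (RatFunc K)) with hψΩ
  have hψΩC : ψΩ.comp Polynomial.C = (algebraMap (RatFunc K) Ω).comp (algebraMap K (RatFunc K)) := by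
    ext a
    rfl
  have hψΩX : ψΩ Polynomial.X = algebraMap (RatFunc K) Ω RatFunc.X := rfl
  -- loci of reducible specializations
  set Lset : (Fin n →₀ ℕ) × (Fin n →₀ ℕ) → Set A := fun m =>
    {lam | (m.1.degree ≠ 0 ∧ m.2.degree ≠ 0) ∧ ∃ y : bnV n d → A,
      ∀ e ∈ bnSys f g d m.1 m.2,
        MvPolynomial.eval y
          (MvPolynomial.map (Polynomial.eval₂RingHom (algebraMap K A) lam) e) = 0} with hLset
  have hLfin : ∀ m ∈ (↑(bnMB n d ×ˢ bnMB n d) : Set ((Fin n →₀ ℕ) × (Fin n →₀ ℕ))),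
      (Lset m).Finite := by
    intro m _
    by_cases hdeg : m.1.degree ≠ 0 ∧ m.2.degree ≠ 0
    · have hno : ¬ ∃ y : bnV n d → Ω, ∀ e ∈ bnSys f g d m.1 m.2,
          MvPolynomial.eval y (MvPolynomial.map ψΩ e) = 0 := by
        rintro ⟨y, hy⟩
        obtain ⟨h1, h2, h3⟩ := (bn_sol_iff hfd hgd ψΩ y).mp hy
        rw [hψΩC, hψΩX] at h1
        exact bn_decode hdeg.1 hdeg.2 h1 h2 h3 hirr
      refine Set.Finite.subset (bn_transfer (bnSys f g d m.1 m.2) hno) ?_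
      intro lam hlam
      exact hlam.2
    · refine Set.Finite.subset Set.finite_empty ?_
      intro lam hlam
      exact absurd hlam.1 hdeg
  have hdegfin : Set.Finite {lam : A |
      (MvPolynomial.map (algebraMap K A) f
        - MvPolynomial.C lam * MvPolynomial.map (algebraMap K A) g).totalDegree ≠ d} :=
    (bn_degbad_subsingleton f g hd).finite
  refine Set.Finite.subset
    (Set.Finite.union hdegfin
      (Set.Finite.biUnion (Finset.finite_toSet _) hLfin)) ?_
  intro lam hlam
  by_cases hdeg : (MvPolynomial.map (algebraMap K A) f
      - MvPolynomial.C lam * MvPolynomial.map (algebraMap K A) g).totalDegree = d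
  · refine Set.mem_union_right _ ?_
    have hnotirr : ¬ Irreducible (MvPolynomial.map (algebraMap K A) f
        - MvPolynomial.C lam * MvPolynomial.map (algebraMap K A) g) :=
      fun hi => hlam ⟨hdeg, hi⟩
    obtain ⟨m₁, m₂, hm₁, hm₂, hd₁, hd₂, y, hy1, hy2, hy3⟩ :=
      bn_encode (L := A) hd1 hdeg hnotirr
    set ψl : Polynomial K →+* A := Polynomial.eval₂RingHom (algebraMap K A) lam with hψl
    have hψlC : ψl.comp Polynomial.C = algebraMap K A := by
      ext a
      simp [hψl]
    have hψlX : ψl Polynomial.X = lam := by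
      simp [hψl]
    refine Set.mem_biUnion (x := (m₁, m₂)) (Finset.mem_coe.mpr (Finset.mem_product.mpr ⟨hm₁, hm₂⟩)) ?_
    refine ⟨⟨hd₁, hd₂⟩, y, (bn_sol_iff hfd hgd ψl y).mpr ⟨?_, hy2, hy3⟩⟩
    rw [hψlC, hψlX]
    exact hy1
  · exact Set.mem_union_left _ hdeg
end
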